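/- arXiv:1707.07515 — 5 statements merged into one kernel-verified Lean document; each statement's English description precedes it below -/
import Mathlib

section
/- Let ε > 0 and let x : [0,∞) → ℝ be a differentiable solution of the gradient-flow equation x′(t) = −f_ε′(x(t)) for all t ≥ 0. Then |x(t)² − x(0)²| ≤ 2πε for every t ≥ 0; in particular solutions of the gradient flow of f_ε never move far from their initial datum and get trapped near a local minimum. -/
open Real Set Filter Topology

/-- A solution of an autonomous ODE with `C¹` right-hand side cannot cross a stationary
point from below. -/
lemma trap_above (v : ℝ → ℝ) (hv : ContDiff ℝ 1 v) (β : ℝ) (hβ : v β = 0)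
    (x : ℝ → ℝ) (hx : ∀ t ≥ (0:ℝ), HasDerivAt x (v (x t)) t)
    (h0 : x 0 ≤ β) : ∀ t ≥ (0:ℝ), x t ≤ β := by
  intro t₁ ht₁
  by_contra hcon
  push_neg at hcon
  have hcont : ContinuousOn x (Icc 0 t₁) := fun t ht =>
    ((hx t ht.1).continuousAt).continuousWithinAt
  -- by the intermediate value theorem, `x` hits the stationary value `β` somewhere on `[0, t₁]`
  have hIVT : β ∈ x '' Icc 0 t₁ := intermediate_value_Icc ht₁ hcont ⟨h0, hcon.le⟩
  obtain ⟨s, hs, hxs⟩ := hIVT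
  have hcont' : ContinuousOn x (Icc s t₁) := hcont.mono (Icc_subset_Icc hs.1 le_rfl)
  obtain ⟨C, hC⟩ := (isCompact_Icc : IsCompact (Icc s t₁)).exists_bound_of_continuousOn hcont'
  set R : ℝ := |β| + |C| + 1 with hR
  have hβR : β ∈ Icc (-R) R := by
    constructor <;> [nlinarith [abs_nonneg C, neg_abs_le β]; nlinarith [abs_nonneg C, le_abs_self β]]
  have hmem : ∀ t ∈ Icc s t₁, x t ∈ Icc (-R) R := by
    intro t ht
    have h1 : |x t| ≤ C := by simpa using hC t ht
    have h2 : C ≤ |C| := le_abs_self C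
    constructor
    · nlinarith [neg_abs_le (x t), abs_nonneg β]
    · nlinarith [le_abs_self (x t), abs_nonneg β]
  -- `v` is Lipschitz on the compact set `Icc (-R) R`
  have hdc : Continuous (deriv v) := hv.continuous_deriv le_rfl
  obtain ⟨K, hK⟩ := (isCompact_Icc : IsCompact (Icc (-R) R)).exists_bound_of_continuousOn
    hdc.continuousOn
  have hlip : LipschitzOnWith K.toNNReal v (Icc (-R) R) := by
    apply (convex_Icc _ _).lipschitzOnWith_of_nnnorm_deriv_le
      (fun y _ => (hv.differentiable one_ne_zero).differentiableAt)
    intro y hy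
    rw [← NNReal.coe_le_coe, coe_nnnorm, Real.coe_toNNReal']
    exact le_max_of_le_left (hK y hy)
  -- uniqueness of solutions: `x` coincides with the constant solution `β` on `[s, t₁]`
  have huniq : EqOn x (fun _ => β) (Icc s t₁) := by
    apply ODE_solution_unique_of_mem_Icc_right
      (v := fun _ y => v y) (s := fun _ => Icc (-R) R) (K := K.toNNReal)
      (fun _ _ => hlip) hcont'
      (fun t ht => (hx t (le_trans hs.1 ht.1)).hasDerivWithinAt)
      (fun t ht => hmem t (Ico_subset_Icc_self ht))
      continuousOn_const
      (fun t ht => by simpa [hβ] using (hasDerivWithinAt_const t (Ici t) β))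
      (fun t _ => hβR) hxs
  have : x t₁ = β := huniq ⟨hs.2, le_rfl⟩
  linarith

lemma trap_below (v : ℝ → ℝ) (hv : ContDiff ℝ 1 v) (α : ℝ) (hα : v α = 0)
    (x : ℝ → ℝ) (hx : ∀ t ≥ (0:ℝ), HasDerivAt x (v (x t)) t)
    (h0 : α ≤ x 0) : ∀ t ≥ (0:ℝ), α ≤ x t := by
  have key := trap_above (fun y => -v (-y)) ((hv.comp contDiff_neg).neg) (-α)
    (by simp [hα]) (fun t => -(x t))
    (fun t ht => by simp only [neg_neg]; exact (hx t ht).neg) (by simpa using h0)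
  intro t ht
  have := key t ht
  simpa using this

/-- Between any nonnegative level `θ` and within a window of width `2π`, one can find
stationary levels `a ≤ θ ≤ b` of the wiggly potential (i.e. `cos = -1/2`, or `0`). -/
lemma exists_levels (θ : ℝ) (hθ0 : 0 ≤ θ) :
    ∃ a b : ℝ, 0 ≤ a ∧ a ≤ θ ∧ θ ≤ b ∧ b - a ≤ 2*Real.pi ∧
      (a = 0 ∨ Real.cos a = -(1/2)) ∧ Real.cos b = -(1/2) := by
  have hπ : (0:ℝ) < Real.pi := Real.pi_pos
  have hcos23 : Real.cos (2*Real.pi/3) = -(1/2) := by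
    rw [show (2*Real.pi/3) = Real.pi - Real.pi/3 by ring, Real.cos_pi_sub,
      Real.cos_pi_div_three]
  obtain ⟨k, hk⟩ : ∃ k : ℤ, k = ⌈(θ - 2*Real.pi/3) / (2*Real.pi)⌉ := ⟨_, rfl⟩
  have h1 : (θ - 2*Real.pi/3) / (2*Real.pi) ≤ (k : ℝ) := hk ▸ Int.le_ceil _
  have h2 : ((k : ℝ)) < (θ - 2*Real.pi/3) / (2*Real.pi) + 1 := hk ▸ Int.ceil_lt_add_one _
  have hθb : θ ≤ 2*Real.pi*(k:ℝ) + 2*Real.pi/3 := by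
    rw [div_le_iff₀ (by positivity)] at h1; linarith
  have hbθ : 2*Real.pi*(k:ℝ) + 2*Real.pi/3 - 2*Real.pi < θ := by
    have h3 : ((k:ℝ)) - 1 < (θ - 2*Real.pi/3) / (2*Real.pi) := by linarith
    have h4 := (lt_div_iff₀ (show (0:ℝ) < 2*Real.pi by positivity)).mp h3
    linarith
  refine ⟨max 0 (2*Real.pi*(k:ℝ) + 2*Real.pi/3 - 2*Real.pi),
    2*Real.pi*(k:ℝ) + 2*Real.pi/3, le_max_left _ _, max_le hθ0 hbθ.le, hθb, ?_, ?_, ?_⟩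
  · have := le_max_right 0 (2*Real.pi*(k:ℝ) + 2*Real.pi/3 - 2*Real.pi); linarith
  · rcases le_or_gt (2*Real.pi*(k:ℝ) + 2*Real.pi/3 - 2*Real.pi) 0 with h | h
    · left; rw [max_eq_left h]
    · right
      rw [max_eq_right h.le,
        show 2*Real.pi*(k:ℝ) + 2*Real.pi/3 - 2*Real.pi
          = 2*Real.pi/3 + ((k - 1 : ℤ) : ℝ) * (2*Real.pi) by push_cast; ring,
        Real.cos_add_int_mul_two_pi, hcos23]
  · rw [show 2*Real.pi*(k:ℝ) + 2*Real.pi/3 = 2*Real.pi/3 + (k : ℝ) * (2*Real.pi) by ring,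
      Real.cos_add_int_mul_two_pi, hcos23]

/-- Let `ε > 0` and let `x : [0,∞) → ℝ` be a differentiable solution of the gradient-flow
equation `x′(t) = −f_ε′(x(t))` for the wiggly potential `f_ε(x) = x² + 2ε·sin(x²/ε)`
(whose derivative is `f_ε′(x) = 2x·(1 + 2·cos(x²/ε))`). Then `|x(t)² − x(0)²| ≤ 2πε`
for every `t ≥ 0`. -/
theorem stmt_2 (ε : ℝ) (hε : 0 < ε) (x : ℝ → ℝ)
    (hx : ∀ t ≥ (0:ℝ), HasDerivAt x (-(2*(x t)*(1 + 2*Real.cos ((x t)^2/ε)))) t) :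
    ∀ t ≥ (0:ℝ), |(x t)^2 - (x 0)^2| ≤ 2*Real.pi*ε := by
  set v : ℝ → ℝ := fun y => -(2*y*(1 + 2*Real.cos (y^2/ε))) with hv_def
  have hvC : ContDiff ℝ 1 v := by
    apply ContDiff.neg
    apply ContDiff.mul
    · exact contDiff_const.mul contDiff_id
    · apply ContDiff.add contDiff_const
      apply ContDiff.mul contDiff_const
      exact Real.contDiff_cos.comp ((contDiff_id.pow 2).div_const ε)
  have hx' : ∀ t ≥ (0:ℝ), HasDerivAt x (v (x t)) t := hx
  have hvodd : ∀ y : ℝ, v (-y) = -v y := by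
    intro y; simp only [hv_def, neg_sq]; ring
  have hπ : (0:ℝ) < Real.pi := Real.pi_pos
  have hθ0 : 0 ≤ (x 0)^2 / ε := div_nonneg (sq_nonneg _) hε.le
  have hεθ : ε * ((x 0)^2 / ε) = (x 0)^2 := by field_simp
  obtain ⟨a, b, ha0, haθ, hθb, hab, hcosa, hcosb⟩ := exists_levels ((x 0)^2 / ε) hθ0
  have hb0 : 0 ≤ b := le_trans hθ0 hθb
  -- the stationary barriers in the x-variable
  set α : ℝ := Real.sqrt (ε * a) with hα_def
  set B : ℝ := Real.sqrt (ε * b) with hB_def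
  have hα0 : 0 ≤ α := Real.sqrt_nonneg _
  have hB0 : 0 ≤ B := Real.sqrt_nonneg _
  have hαsq : α^2 = ε * a := Real.sq_sqrt (by positivity)
  have hBsq : B^2 = ε * b := Real.sq_sqrt (by positivity)
  have hvB : v B = 0 := by
    have h : B^2 / ε = b := by rw [hBsq]; field_simp
    simp only [hv_def, h, hcosb]; ring
  have hvα : v α = 0 := by
    rcases hcosa with h | h
    · have h' : α = 0 := by rw [hα_def, h, mul_zero, Real.sqrt_zero]
      simp [hv_def, h']
    · have h' : α^2 / ε = a := by rw [hαsq]; field_simp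
      simp only [hv_def, h', h]; ring
  have hvnB : v (-B) = 0 := by rw [hvodd, hvB, neg_zero]
  have hvnα : v (-α) = 0 := by rw [hvodd, hvα, neg_zero]
  -- the initial datum lies between the two barriers (in absolute value)
  have hαx0 : α ≤ |x 0| := by
    rw [hα_def, ← Real.sqrt_sq_eq_abs]
    exact Real.sqrt_le_sqrt (by nlinarith)
  have hx0B : |x 0| ≤ B := by
    rw [hB_def, ← Real.sqrt_sq_eq_abs]
    exact Real.sqrt_le_sqrt (by nlinarith)
  -- the squared solution stays between the stationary levels
  have hsq : ∀ t ≥ (0:ℝ), ε * a ≤ (x t)^2 ∧ (x t)^2 ≤ ε * b := by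
    rcases le_or_gt 0 (x 0) with h0 | h0
    · -- x 0 ≥ 0 : trapped in [α, B]
      have hαx : α ≤ x 0 := by rw [abs_of_nonneg h0] at hαx0; exact hαx0
      have hxB : x 0 ≤ B := by rw [abs_of_nonneg h0] at hx0B; exact hx0B
      have hup := trap_above v hvC B hvB x hx' hxB
      have hlo := trap_below v hvC α hvα x hx' hαx
      intro t ht
      have h1 := hup t ht
      have h2 := hlo t ht
      refine ⟨?_, ?_⟩
      · rw [← hαsq]; exact pow_le_pow_left₀ hα0 h2 2
      · rw [← hBsq]; exact pow_le_pow_left₀ (le_trans hα0 h2) h1 2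
    · -- x 0 < 0 : trapped in [-B, -α]
      have hαx : x 0 ≤ -α := by rw [abs_of_neg h0] at hαx0; linarith
      have hxB : -B ≤ x 0 := by rw [abs_of_neg h0] at hx0B; linarith
      have hup := trap_above v hvC (-α) hvnα x hx' hαx
      have hlo := trap_below v hvC (-B) hvnB x hx' hxB
      intro t ht
      have h1 := hup t ht
      have h2 := hlo t ht
      refine ⟨?_, ?_⟩
      · have : α ≤ -(x t) := by linarith
        have := pow_le_pow_left₀ hα0 this 2
        rw [← hαsq]; simpa [neg_pow] using this
      · have h3 : -(x t) ≤ B := by linarith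
        have h4 : (0:ℝ) ≤ -(x t) := by linarith
        have := pow_le_pow_left₀ h4 h3 2
        rw [← hBsq]; simpa [neg_pow] using this
  intro t ht
  obtain ⟨h1, h2⟩ := hsq t ht
  have h3 : ε * a ≤ (x 0)^2 := by
    rw [← hεθ]; exact mul_le_mul_of_nonneg_left haθ hε.le
  have h4 : (x 0)^2 ≤ ε * b := by
    rw [← hεθ]; exact mul_le_mul_of_nonneg_left hθb hε.le
  have h5 : ε * b - ε * a ≤ 2*Real.pi*ε := by
    calc ε * b - ε * a = ε * (b - a) := by ring
      _ ≤ ε * (2*Real.pi) := mul_le_mul_of_nonneg_left hab hε.le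
      _ = 2*Real.pi*ε := by ring
  rw [abs_le]
  constructor <;> linarith
end

section
/- Let φ(x) = (2/π)·arctan(x) and W(u) = (cos(πu) + 1)/π. Then for every x ∈ ℝ the principal value A φ(x) = lim_{δ→0⁺} ∫_{{y : |y−x| ≥ δ}} (φ(y) − φ(x))/(y−x)² dy exists, and A φ(x) = −2x/(1+x²) = −sin(π·φ(x)) = W′(φ(x)). In other words, φ is a monotone increasing solution of the Peierls–Nabarro layer equation A φ − W′(φ) = 0 connecting the wells −1 and +1 of W. -/
open Real Set Filter Topology MeasureTheory

/-! Auxiliary definitions: `pvF x` is the integrand of the half-Laplacian of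
`φ = (2/π)·arctan` at `x`, and `pvG x` is an explicit antiderivative of it. -/

noncomputable def pvF (x y : ℝ) : ℝ :=
  ((2/Real.pi)*Real.arctan y - (2/Real.pi)*Real.arctan x)/(y - x)^2

noncomputable def pvG (x y : ℝ) : ℝ :=
  ((2/Real.pi)*Real.arctan x - (2/Real.pi)*Real.arctan y)/(y - x) +
    2/(Real.pi*(1+x^2)) *
      (Real.log (y - x) - (1/2)*Real.log (1+y^2) - x * Real.arctan y)

lemma pvG_hasDerivAt (x y : ℝ) (hy : y ≠ x) : HasDerivAt (pvG x) (pvF x y) y := by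
  have hyx : y - x ≠ 0 := sub_ne_zero.2 hy
  have hy2 : (1:ℝ) + y^2 ≠ 0 := by positivity
  have hπ : Real.pi ≠ 0 := Real.pi_ne_zero
  have h1 : HasDerivAt (fun y : ℝ => (2/Real.pi)*Real.arctan x - (2/Real.pi)*Real.arctan y)
      (-((2/Real.pi) * (1/(1+y^2)))) y :=
    (((Real.hasDerivAt_arctan y).const_mul (2/Real.pi))).const_sub _
  have h2 : HasDerivAt (fun y : ℝ => y - x) 1 y := (hasDerivAt_id y).sub_const x
  have hdiv := h1.div h2 hyx
  have h3 : HasDerivAt (fun y : ℝ => Real.log (y - x)) (1/(y-x)) y := by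
    simpa using h2.log hyx
  have h4 : HasDerivAt (fun y : ℝ => 1 + y^2) (2*y) y := by
    simpa using (hasDerivAt_pow 2 y).const_add 1
  have h5 : HasDerivAt (fun y : ℝ => Real.log (1+y^2)) (2*y/(1+y^2)) y := h4.log hy2
  have h6 : HasDerivAt (fun y : ℝ => x * Real.arctan y) (x * (1/(1+y^2))) y :=
    (Real.hasDerivAt_arctan y).const_mul x
  have hsum := hdiv.add
    (((h3.sub (h5.const_mul (1/2))).sub h6).const_mul (2/(Real.pi*(1+x^2))))
  refine hsum.congr_deriv ?_
  have hx2 : (1:ℝ) + x^2 ≠ 0 := by positivity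
  unfold pvF
  field_simp
  ring

lemma tendsto_inv_atBot_zero' : Tendsto (fun y : ℝ => y⁻¹) atBot (𝓝 0) := by
  have h := (tendsto_inv_atTop_zero (𝕜 := ℝ)).comp tendsto_neg_atBot_atTop
  have h2 : Tendsto (fun y : ℝ => -(-y)⁻¹) atBot (𝓝 (-0)) := h.neg
  simpa [inv_neg] using h2

lemma log_ratio_aux (x : ℝ) :
    Tendsto (fun t : ℝ => (1/2) * Real.log ((1 - x*t)^2/(t^2+1))) (𝓝 0) (𝓝 0) := by
  have h1 : ContinuousAt (fun t : ℝ => (1 - x*t)^2/(t^2+1)) 0 := by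
    fun_prop (disch := intros; positivity)
  have h3 : ContinuousAt (fun t : ℝ => (1/2) * Real.log ((1 - x*t)^2/(t^2+1))) 0 :=
    (h1.log (by norm_num)).const_mul (1/2)
  have := h3.tendsto
  simpa using this

lemma log_ratio_eq (x y : ℝ) (hy : y ≠ 0) (hyx : y - x ≠ 0) :
    Real.log (y - x) - (1/2)*Real.log (1+y^2)
      = (1/2) * Real.log ((1 - x*y⁻¹)^2/((y⁻¹)^2+1)) := by
  have hy2 : (1:ℝ) + y^2 ≠ 0 := by positivity
  have hr : (1 - x*y⁻¹)^2/((y⁻¹)^2+1) = (y-x)^2/(1+y^2) := by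
    field_simp
  rw [hr, Real.log_div (pow_ne_zero _ hyx) hy2, Real.log_pow]
  push_cast
  ring

lemma log_ratio_top (x : ℝ) :
    Tendsto (fun y : ℝ => Real.log (y - x) - (1/2)*Real.log (1+y^2)) atTop (𝓝 0) := by
  apply Tendsto.congr' _ ((log_ratio_aux x).comp tendsto_inv_atTop_zero)
  filter_upwards [eventually_gt_atTop (max x 0)] with y hy
  have h0 : y ≠ 0 := ne_of_gt (lt_of_le_of_lt (le_max_right x 0) hy)
  have h1 : y - x ≠ 0 := sub_ne_zero.2 (ne_of_gt (lt_of_le_of_lt (le_max_left x 0) hy))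
  exact (log_ratio_eq x y h0 h1).symm

lemma log_ratio_bot (x : ℝ) :
    Tendsto (fun y : ℝ => Real.log (y - x) - (1/2)*Real.log (1+y^2)) atBot (𝓝 0) := by
  apply Tendsto.congr' _ ((log_ratio_aux x).comp tendsto_inv_atBot_zero')
  filter_upwards [eventually_lt_atBot (min x 0)] with y hy
  have h0 : y ≠ 0 := ne_of_lt (lt_of_lt_of_le hy (min_le_right x 0))
  have h1 : y - x ≠ 0 := sub_ne_zero.2 (ne_of_lt (lt_of_lt_of_le hy (min_le_left x 0)))
  exact (log_ratio_eq x y h0 h1).symm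

lemma inv_sub_top (x : ℝ) : Tendsto (fun y : ℝ => (y - x)⁻¹) atTop (𝓝 0) :=
  tendsto_inv_atTop_zero.comp (tendsto_atTop_add_const_right atTop (-x) tendsto_id)

lemma inv_sub_bot (x : ℝ) : Tendsto (fun y : ℝ => (y - x)⁻¹) atBot (𝓝 0) :=
  tendsto_inv_atBot_zero'.comp (tendsto_atBot_add_const_right atBot (-x) tendsto_id)

lemma pvG_top (x : ℝ) : Tendsto (pvG x) atTop (𝓝 (-x/(1+x^2))) := by
  have hπ : Real.pi ≠ 0 := Real.pi_ne_zero
  have harc : Tendsto (fun y : ℝ => (2/Real.pi)*Real.arctan x - (2/Real.pi)*Real.arctan y)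
      atTop (𝓝 ((2/Real.pi)*Real.arctan x - (2/Real.pi)*(Real.pi/2))) :=
    tendsto_const_nhds.sub ((Real.tendsto_arctan_atTop.mono_right nhdsWithin_le_nhds).const_mul _)
  have hA : Tendsto (fun y : ℝ =>
      ((2/Real.pi)*Real.arctan x - (2/Real.pi)*Real.arctan y)/(y - x)) atTop (𝓝 0) := by
    have := harc.mul (inv_sub_top x)
    simpa [div_eq_mul_inv] using this
  have hB : Tendsto (fun y : ℝ =>
      2/(Real.pi*(1+x^2)) * (Real.log (y - x) - (1/2)*Real.log (1+y^2) - x * Real.arctan y))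
      atTop (𝓝 (2/(Real.pi*(1+x^2)) * (0 - x * (Real.pi/2)))) := by
    exact (((log_ratio_top x).sub
      (((Real.tendsto_arctan_atTop.mono_right nhdsWithin_le_nhds)).const_mul x)).const_mul _)
  have := hA.add hB
  have hval : (0:ℝ) + 2/(Real.pi*(1+x^2)) * (0 - x * (Real.pi/2)) = -x/(1+x^2) := by
    have hx2 : (1:ℝ) + x^2 ≠ 0 := by positivity
    field_simp
    ring
  rw [hval] at this
  exact this

lemma pvG_bot (x : ℝ) : Tendsto (pvG x) atBot (𝓝 (x/(1+x^2))) := by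
  have hπ : Real.pi ≠ 0 := Real.pi_ne_zero
  have harc : Tendsto (fun y : ℝ => (2/Real.pi)*Real.arctan x - (2/Real.pi)*Real.arctan y)
      atBot (𝓝 ((2/Real.pi)*Real.arctan x - (2/Real.pi)*(-(Real.pi/2)))) :=
    tendsto_const_nhds.sub ((Real.tendsto_arctan_atBot.mono_right nhdsWithin_le_nhds).const_mul _)
  have hA : Tendsto (fun y : ℝ =>
      ((2/Real.pi)*Real.arctan x - (2/Real.pi)*Real.arctan y)/(y - x)) atBot (𝓝 0) := by
    have := harc.mul (inv_sub_bot x)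
    simpa [div_eq_mul_inv] using this
  have hB : Tendsto (fun y : ℝ =>
      2/(Real.pi*(1+x^2)) * (Real.log (y - x) - (1/2)*Real.log (1+y^2) - x * Real.arctan y))
      atBot (𝓝 (2/(Real.pi*(1+x^2)) * (0 - x * (-(Real.pi/2))))) := by
    exact (((log_ratio_bot x).sub
      (((Real.tendsto_arctan_atBot.mono_right nhdsWithin_le_nhds)).const_mul x)).const_mul _)
  have := hA.add hB
  have hval : (0:ℝ) + 2/(Real.pi*(1+x^2)) * (0 - x * (-(Real.pi/2))) = x/(1+x^2) := by
    have hx2 : (1:ℝ) + x^2 ≠ 0 := by positivity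
    field_simp
    ring
  rw [hval] at this
  exact this

lemma pvF_nonneg (x : ℝ) {y : ℝ} (h : x ≤ y) : 0 ≤ pvF x y := by
  unfold pvF
  apply div_nonneg _ (sq_nonneg _)
  have := Real.arctan_strictMono.monotone h
  have hπ : 0 < 2/Real.pi := by positivity
  nlinarith

lemma pvF_nonpos (x : ℝ) {y : ℝ} (h : y ≤ x) : pvF x y ≤ 0 := by
  unfold pvF
  apply div_nonpos_of_nonpos_of_nonneg _ (sq_nonneg _)
  have := Real.arctan_strictMono.monotone h
  have hπ : 0 < 2/Real.pi := by positivity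
  nlinarith

lemma plus_integrable (x δ : ℝ) (hδ : 0 < δ) : IntegrableOn (pvF x) (Ici (x+δ)) := by
  rw [integrableOn_Ici_iff_integrableOn_Ioi]
  apply integrableOn_Ioi_deriv_of_nonneg' (g := pvG x)
    (fun y hy => pvG_hasDerivAt x y (by rw [mem_Ici] at hy; nlinarith))
    (fun y hy => pvF_nonneg x (by rw [mem_Ioi] at hy; nlinarith))
    (pvG_top x)

lemma plus_integral (x δ : ℝ) (hδ : 0 < δ) :
    ∫ y in Ioi (x+δ), pvF x y = -x/(1+x^2) - pvG x (x+δ) :=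
  integral_Ioi_of_hasDerivAt_of_nonneg'
    (fun y hy => pvG_hasDerivAt x y (by rw [mem_Ici] at hy; nlinarith))
    (fun y hy => pvF_nonneg x (by rw [mem_Ioi] at hy; nlinarith))
    (pvG_top x)

lemma minus_hasDerivAt (x δ : ℝ) (hδ : 0 < δ) :
    ∀ y ∈ Ici (δ - x), HasDerivAt (fun y : ℝ => -(pvG x (-y))) (pvF x (-y)) y := by
  intro y hy
  rw [mem_Ici] at hy
  have hne : -y ≠ x := by
    have : -y ≤ x - δ := by linarith
    exact ne_of_lt (by linarith)
  have h1 := (pvG_hasDerivAt x (-y) hne).comp y (hasDerivAt_neg y)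
  have h2 := h1.neg
  refine h2.congr_deriv ?_
  ring

lemma minus_integrable (x δ : ℝ) (hδ : 0 < δ) : IntegrableOn (pvF x) (Iic (x-δ)) := by
  have h1 : IntegrableOn (fun y : ℝ => pvF x (-y)) (Ioi (δ - x)) :=
    integrableOn_Ioi_deriv_of_nonpos' (minus_hasDerivAt x δ hδ)
      (fun y hy => pvF_nonpos x (by rw [mem_Ioi] at hy; nlinarith))
      (((pvG_bot x).comp tendsto_neg_atTop_atBot).neg)
  have hmp : MeasurePreserving (fun y : ℝ => -y) volume volume :=
    Measure.measurePreserving_neg _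
  have hme : MeasurableEmbedding (fun y : ℝ => -y) :=
    (Homeomorph.neg ℝ).measurableEmbedding
  have := (hmp.integrableOn_comp_preimage hme (f := pvF x) (s := Iic (x - δ))).1
  apply this
  have hpre : (fun y : ℝ => -y) ⁻¹' Iic (x - δ) = Ici (δ - x) := by
    ext y; simp only [mem_preimage, mem_Iic, mem_Ici]
    constructor <;> intro h <;> linarith
  rw [hpre, integrableOn_Ici_iff_integrableOn_Ioi]
  exact h1

lemma minus_integral (x δ : ℝ) (hδ : 0 < δ) :
    ∫ y in Iic (x-δ), pvF x y = pvG x (x-δ) - x/(1+x^2) := by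
  have h1 : ∫ y in Ioi (δ-x), pvF x (-y) = -(x/(1+x^2)) - -(pvG x (-(δ-x))) :=
    integral_Ioi_of_hasDerivAt_of_nonpos' (minus_hasDerivAt x δ hδ)
      (fun y hy => pvF_nonpos x (by rw [mem_Ioi] at hy; linarith))
      (((pvG_bot x).comp tendsto_neg_atTop_atBot).neg)
  have h2 := integral_comp_neg_Ioi (δ-x) (pvF x)
  rw [show -(δ-x) = x-δ by ring] at h2
  rw [show -(δ-x) = x-δ by ring] at h1
  rw [← h2, h1]
  ring

lemma set_eq (x δ : ℝ) : {y : ℝ | δ ≤ |y - x|} = Iic (x-δ) ∪ Ici (x+δ) := by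
  ext y
  simp only [mem_setOf_eq, mem_union, mem_Iic, mem_Ici, le_abs]
  constructor
  · rintro (h | h)
    · right; linarith
    · left; linarith
  · rintro (h | h)
    · right; linarith
    · left; linarith

lemma total_integral (x δ : ℝ) (hδ : 0 < δ) :
    ∫ y in {y : ℝ | δ ≤ |y - x|}, pvF x y
      = pvG x (x-δ) - pvG x (x+δ) - 2*x/(1+x^2) := by
  rw [set_eq, setIntegral_union ((Iic_disjoint_Ici).2 (not_le.2 (by linarith)))
      measurableSet_Ici (minus_integrable x δ hδ) (plus_integrable x δ hδ),
    integral_Ici_eq_integral_Ioi, plus_integral x δ hδ, minus_integral x δ hδ]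
  ring

noncomputable def pvR (x δ : ℝ) : ℝ :=
  (slope (fun y : ℝ => (2/Real.pi)*Real.arctan y) x (x+δ)
    - slope (fun y : ℝ => (2/Real.pi)*Real.arctan y) x (x-δ))
  + 2/(Real.pi*(1+x^2)) *
      ((1/2)*Real.log (1+(x+δ)^2) - (1/2)*Real.log (1+(x-δ)^2)
        + x*(Real.arctan (x+δ) - Real.arctan (x-δ)))

lemma pvR_eq (x δ : ℝ) (hδ : 0 < δ) : pvG x (x-δ) - pvG x (x+δ) = pvR x δ := by
  have hπ : Real.pi ≠ 0 := Real.pi_ne_zero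
  have hx2 : (1:ℝ) + x^2 ≠ 0 := by positivity
  have hδ0 : δ ≠ 0 := ne_of_gt hδ
  unfold pvG pvR
  rw [slope_def_field, slope_def_field]
  rw [show x - δ - x = -δ by ring, show x + δ - x = δ by ring, Real.log_neg_eq_log]
  field_simp
  ring

lemma map_plus (x : ℝ) : Tendsto (fun δ : ℝ => x + δ) (𝓝[>] 0) (𝓝[≠] x) := by
  refine tendsto_nhdsWithin_iff.2 ⟨?_, ?_⟩
  · have h : Tendsto (fun δ : ℝ => x + δ) (𝓝 0) (𝓝 (x+0)) :=
      tendsto_const_nhds.add tendsto_id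
    simpa using h.mono_left nhdsWithin_le_nhds
  · filter_upwards [self_mem_nhdsWithin] with δ hδ
    have : (0:ℝ) < δ := hδ
    simp only [mem_compl_iff, mem_singleton_iff]
    intro h; linarith [congrArg id h]

lemma map_minus (x : ℝ) : Tendsto (fun δ : ℝ => x - δ) (𝓝[>] 0) (𝓝[≠] x) := by
  refine tendsto_nhdsWithin_iff.2 ⟨?_, ?_⟩
  · have h : Tendsto (fun δ : ℝ => x - δ) (𝓝 0) (𝓝 (x-0)) :=
      tendsto_const_nhds.sub tendsto_id
    simpa using h.mono_left nhdsWithin_le_nhds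
  · filter_upwards [self_mem_nhdsWithin] with δ hδ
    have : (0:ℝ) < δ := hδ
    simp only [mem_compl_iff, mem_singleton_iff]
    intro h
    have h2 : x - δ - x = -δ := by ring
    rw [h] at h2
    simp at h2
    linarith

lemma pvR_tendsto (x : ℝ) : Tendsto (pvR x) (𝓝[>] 0) (𝓝 0) := by
  have hd : HasDerivAt (fun y : ℝ => (2/Real.pi)*Real.arctan y)
      ((2/Real.pi) * (1/(1+x^2))) x := (Real.hasDerivAt_arctan x).const_mul _
  have hslope := hasDerivAt_iff_tendsto_slope.1 hd
  have h1 := hslope.comp (map_plus x)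
  have h2 := hslope.comp (map_minus x)
  have hA : Tendsto (fun δ : ℝ =>
      slope (fun y : ℝ => (2/Real.pi)*Real.arctan y) x (x+δ)
        - slope (fun y : ℝ => (2/Real.pi)*Real.arctan y) x (x-δ)) (𝓝[>] 0) (𝓝 0) := by
    have := h1.sub h2
    simpa using this
  have hlog1 : ContinuousAt (fun δ : ℝ => Real.log (1+(x+δ)^2)) 0 :=
    ContinuousAt.log (by fun_prop) (by positivity)
  have hlog2 : ContinuousAt (fun δ : ℝ => Real.log (1+(x-δ)^2)) 0 :=
    ContinuousAt.log (by fun_prop) (by positivity)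
  have harc : ContinuousAt (fun δ : ℝ => x*(Real.arctan (x+δ) - Real.arctan (x-δ))) 0 := by
    exact (((Real.continuous_arctan.comp (continuous_const.add continuous_id)).continuousAt).sub
      ((Real.continuous_arctan.comp (continuous_const.sub continuous_id)).continuousAt)).const_mul x
  have hB0 : ContinuousAt (fun δ : ℝ => 2/(Real.pi*(1+x^2)) *
      ((1/2)*Real.log (1+(x+δ)^2) - (1/2)*Real.log (1+(x-δ)^2)
        + x*(Real.arctan (x+δ) - Real.arctan (x-δ)))) 0 :=
    (((hlog1.const_mul (1/2)).sub (hlog2.const_mul (1/2))).add harc).const_mul _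
  have hB : Tendsto (fun δ : ℝ => 2/(Real.pi*(1+x^2)) *
      ((1/2)*Real.log (1+(x+δ)^2) - (1/2)*Real.log (1+(x-δ)^2)
        + x*(Real.arctan (x+δ) - Real.arctan (x-δ)))) (𝓝[>] 0) (𝓝 0) := by
    have h := hB0.tendsto.mono_left (nhdsWithin_le_nhds (s := Ioi (0:ℝ)))
    simpa using h
  have h := hA.add hB
  unfold pvR
  simpa using h

lemma pv_limit (x : ℝ) :
    Tendsto (fun δ : ℝ => ∫ y in {y : ℝ | δ ≤ |y - x|}, pvF x y)
      (𝓝[>] (0:ℝ)) (𝓝 (-2*x/(1+x^2))) := by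
  have hR : Tendsto (fun δ : ℝ => pvR x δ - 2*x/(1+x^2)) (𝓝[>] (0:ℝ))
      (𝓝 (0 - 2*x/(1+x^2))) := (pvR_tendsto x).sub_const _
  rw [show (0:ℝ) - 2*x/(1+x^2) = -2*x/(1+x^2) by ring] at hR
  apply Tendsto.congr' _ hR
  filter_upwards [self_mem_nhdsWithin] with δ (hδ : (0:ℝ) < δ)
  rw [total_integral x δ hδ, pvR_eq x δ hδ]

/-- Let `φ(x) = (2/π)·arctan(x)` and `W(u) = (cos(πu) + 1)/π`. For every `x` the principal
value `A φ(x) = lim_{δ→0⁺} ∫_{|y−x|≥δ} (φ(y) − φ(x))/(y−x)² dy` exists and equals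
`−2x/(1+x²) = −sin(π·φ(x)) = W′(φ(x))`; moreover `φ` is monotone increasing and connects
the wells `−1` and `+1` of `W`. -/
theorem stmt_6 :
    StrictMono (fun x : ℝ => (2/Real.pi)*Real.arctan x) ∧
    Tendsto (fun x : ℝ => (2/Real.pi)*Real.arctan x) atTop (𝓝 1) ∧
    Tendsto (fun x : ℝ => (2/Real.pi)*Real.arctan x) atBot (𝓝 (-1)) ∧
    ∀ x : ℝ,
      Tendsto (fun δ : ℝ => ∫ y in {y : ℝ | δ ≤ |y - x|},
          ((2/Real.pi)*Real.arctan y - (2/Real.pi)*Real.arctan x)/(y - x)^2)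
        (𝓝[>] (0:ℝ)) (𝓝 (-2*x/(1+x^2))) ∧
      -2*x/(1+x^2) = -Real.sin (Real.pi * ((2/Real.pi)*Real.arctan x)) ∧
      -Real.sin (Real.pi * ((2/Real.pi)*Real.arctan x)) =
        deriv (fun u : ℝ => (Real.cos (Real.pi*u) + 1)/Real.pi)
          ((2/Real.pi)*Real.arctan x) := by
  have hπ : Real.pi ≠ 0 := Real.pi_ne_zero
  refine ⟨?_, ?_, ?_, ?_⟩
  · intro a b h
    have h1 := Real.arctan_strictMono h
    have h2 : (0:ℝ) < 2/Real.pi := by positivity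
    exact mul_lt_mul_of_pos_left h1 h2
  · have h1 := Filter.Tendsto.const_mul (2/Real.pi)
      (Real.tendsto_arctan_atTop.mono_right nhdsWithin_le_nhds)
    rw [show (2/Real.pi)*(Real.pi/2) = 1 by field_simp] at h1
    exact h1
  · have h1 := Filter.Tendsto.const_mul (2/Real.pi)
      (Real.tendsto_arctan_atBot.mono_right nhdsWithin_le_nhds)
    rw [show (2/Real.pi)*(-(Real.pi/2)) = -1 by field_simp] at h1
    exact h1
  · intro x
    refine ⟨pv_limit x, ?_, ?_⟩
    · have hre : Real.pi * ((2/Real.pi)*Real.arctan x) = 2*Real.arctan x := by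
        field_simp
      rw [hre, Real.sin_two_mul, Real.sin_arctan, Real.cos_arctan]
      have hpos : (0:ℝ) < 1 + x^2 := by positivity
      have hs : Real.sqrt (1+x^2) * Real.sqrt (1+x^2) = 1+x^2 :=
        Real.mul_self_sqrt hpos.le
      have hsne : Real.sqrt (1+x^2) ≠ 0 := by positivity
      field_simp
      rw [Real.sq_sqrt hpos.le]
    · have hder : ∀ t : ℝ, HasDerivAt (fun u : ℝ => (Real.cos (Real.pi*u) + 1)/Real.pi)
          (-Real.sin (Real.pi*t)) t := by
        intro t
        have h1 : HasDerivAt (fun u : ℝ => Real.pi*u) Real.pi t := by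
          simpa using (hasDerivAt_id t).const_mul Real.pi
        have h2 := (Real.hasDerivAt_cos (Real.pi*t)).comp t h1
        have h3 := (h2.add_const 1).div_const Real.pi
        refine h3.congr_deriv ?_
        field_simp
      exact ((hder _).deriv).symm
end

section
/- For every x ∈ ℝ, the principal value lim_{δ→0⁺} ∫_{{y : |y−x| ≥ δ}} 1/((1+y²)(y−x)) dy exists and equals −πx/(1+x²). -/
open Real Set Filter Topology MeasureTheory

noncomputable def Faux (x y : ℝ) : ℝ :=
  (1+x^2)⁻¹ * (Real.log (y - x) - (1/2)*Real.log (1+y^2) - x*Real.arctan y)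

lemma Faux_hasDeriv (x y : ℝ) (hyx : y ≠ x) :
    HasDerivAt (Faux x) (1/((1+y^2)*(y-x))) y := by
  have h0 : y - x ≠ 0 := sub_ne_zero.2 hyx
  have h1 : (0:ℝ) < 1 + y^2 := by positivity
  have hx1 : (0:ℝ) < 1 + x^2 := by positivity
  have d1 : HasDerivAt (fun y : ℝ => Real.log (y - x)) ((y-x)⁻¹) y := by
    have := ((hasDerivAt_id y).sub_const x).log h0
    simpa using this
  have d2 : HasDerivAt (fun y : ℝ => Real.log (1+y^2)) ((2*y)/(1+y^2)) y := by
    have hp : HasDerivAt (fun y : ℝ => 1 + y^2) (2*y) y := by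
      have := ((hasDerivAt_pow 2 y).const_add 1)
      simpa [mul_comm] using this
    have := hp.log h1.ne'
    simpa [div_eq_mul_inv, mul_comm] using this
  have d3 : HasDerivAt Real.arctan (1/(1+y^2)) y := Real.hasDerivAt_arctan y
  have D : HasDerivAt (Faux x) ((1 + x ^ 2)⁻¹ * ((y - x)⁻¹ - 1 / 2 * (2 * y / (1 + y ^ 2)) - x * (1 / (1 + y ^ 2)))) y :=
    ((d1.sub (d2.const_mul (1/2))).sub (d3.const_mul x)).const_mul ((1+x^2)⁻¹)
  convert D using 1
  field_simp
  ring

lemma loglim (a : ℝ) :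
    Tendsto (fun y : ℝ => Real.log (y + a) - (1/2)*Real.log (1+y^2)) atTop (𝓝 0) := by
  have h1 : Tendsto (fun y : ℝ => (y+a)^2/(1+y^2)) atTop (𝓝 1) := by
    have ha : Tendsto (fun y : ℝ => a/y) atTop (𝓝 0) :=
      tendsto_const_nhds.div_atTop tendsto_id
    have hb : Tendsto (fun y : ℝ => 1/y^2) atTop (𝓝 0) :=
      tendsto_const_nhds.div_atTop (tendsto_pow_atTop two_ne_zero)
    have hnum : Tendsto (fun y : ℝ => (1+a/y)^2) atTop (𝓝 1) := by
      have := (tendsto_const_nhds (α := ℝ) (x := (1:ℝ))).add ha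
      simpa using this.pow 2
    have hden : Tendsto (fun y : ℝ => 1/y^2 + 1) atTop (𝓝 1) := by
      simpa using hb.add (tendsto_const_nhds (α := ℝ) (x := (1:ℝ)))
    have h3 : Tendsto (fun y : ℝ => (1+a/y)^2/(1/y^2+1)) atTop (𝓝 1) := by
      have := hnum.div hden one_ne_zero
      rw [div_one] at this
      exact this
    apply h3.congr'
    filter_upwards [eventually_gt_atTop 0] with y hy
    have hy' : y ≠ 0 := ne_of_gt hy
    field_simp
  have h3 : Tendsto (fun y : ℝ => (1/2)*Real.log ((y+a)^2/(1+y^2))) atTop (𝓝 0) := by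
    have h4 : Tendsto (fun y : ℝ => Real.log ((y+a)^2/(1+y^2))) atTop (𝓝 (Real.log 1)) :=
      (Real.continuousAt_log one_ne_zero).tendsto.comp h1
    rw [Real.log_one] at h4
    have h5 := h4.const_mul (1/2 : ℝ)
    rw [mul_zero] at h5
    exact h5
  apply h3.congr'
  filter_upwards [eventually_gt_atTop (max 0 (-a))] with y hy
  have hy0 : 0 < y := lt_of_le_of_lt (le_max_left _ _) hy
  have hya : 0 < y + a := by
    have := lt_of_le_of_lt (le_max_right _ _) hy; linarith
  rw [Real.log_div (by positivity) (by positivity), Real.log_pow]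
  push_cast
  ring

lemma Faux_top (x : ℝ) :
    Tendsto (Faux x) atTop (𝓝 (-((1+x^2)⁻¹ * (x * (π/2))))) := by
  have h1 : Tendsto (fun y : ℝ => Real.log (y - x) - (1/2)*Real.log (1+y^2)) atTop (𝓝 0) := by
    apply (loglim (-x)).congr
    intro y; rw [← sub_eq_add_neg]
  have h2 : Tendsto (fun y : ℝ => x * Real.arctan y) atTop (𝓝 (x * (π/2))) :=
    (Real.tendsto_arctan_atTop.mono_right nhdsWithin_le_nhds).const_mul x
  have h3 := ((h1.sub h2).const_mul ((1+x^2)⁻¹))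
  rw [show (1+x^2)⁻¹ * (0 - x * (π/2)) = -((1+x^2)⁻¹ * (x * (π/2))) from by ring] at h3
  exact h3

lemma Faux_bot (x : ℝ) :
    Tendsto (Faux x) atBot (𝓝 ((1+x^2)⁻¹ * (x * (π/2)))) := by
  have key : Tendsto (fun t : ℝ => Faux x (-t)) atTop (𝓝 ((1+x^2)⁻¹ * (x * (π/2)))) := by
    have h1 : Tendsto (fun t : ℝ => Real.log (-t - x) - (1/2)*Real.log (1+(-t)^2))
        atTop (𝓝 0) := by
      apply (loglim x).congr
      intro t
      rw [show -t - x = -(t + x) from by ring, Real.log_neg_eq_log,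
        show ((-t:ℝ))^2 = t^2 from by ring]
    have h2 : Tendsto (fun t : ℝ => x * Real.arctan (-t)) atTop (𝓝 (x * (-(π/2)))) := by
      have := (Real.tendsto_arctan_atBot.mono_right nhdsWithin_le_nhds).comp
        tendsto_neg_atTop_atBot
      exact (this.const_mul x)
    have h3 := ((h1.sub h2).const_mul ((1+x^2)⁻¹))
    rw [show (1+x^2)⁻¹ * (0 - x * -(π/2)) = (1+x^2)⁻¹ * (x * (π/2)) from by ring] at h3
    exact h3
  have h4 := key.comp tendsto_neg_atBot_atTop
  apply h4.congr
  intro t; simp [Function.comp]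

lemma intR (x δ : ℝ) (hδ : 0 < δ) :
    IntegrableOn (fun y : ℝ => 1/((1+y^2)*(y-x))) (Ioi (x+δ)) := by
  have hg : IntegrableOn (fun y : ℝ => δ⁻¹ * (1+y^2)⁻¹) (Ioi (x+δ)) :=
    integrable_inv_one_add_sq.restrict.const_mul _
  refine hg.mono' ?_ ?_
  · apply Measurable.aestronglyMeasurable
    apply Measurable.div measurable_const
    exact ((measurable_const.add (measurable_id.pow_const 2)).mul
      (measurable_id.sub measurable_const))
  · rw [ae_restrict_iff' measurableSet_Ioi]
    refine ae_of_all _ fun y hy => ?_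
    have h1 : (0:ℝ) < 1 + y^2 := by positivity
    have h2 : δ ≤ y - x := by
      have : x + δ < y := hy
      linarith
    have h3 : 0 < y - x := lt_of_lt_of_le hδ h2
    rw [Real.norm_eq_abs, abs_of_pos (by positivity)]
    rw [one_div, mul_inv, mul_comm ((1+y^2)⁻¹)]
    gcongr

lemma intL (x δ : ℝ) (hδ : 0 < δ) :
    IntegrableOn (fun y : ℝ => 1/((1+y^2)*(y-x))) (Iic (x-δ)) := by
  have hg : IntegrableOn (fun y : ℝ => δ⁻¹ * (1+y^2)⁻¹) (Iic (x-δ)) :=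
    integrable_inv_one_add_sq.restrict.const_mul _
  refine hg.mono' ?_ ?_
  · apply Measurable.aestronglyMeasurable
    apply Measurable.div measurable_const
    exact ((measurable_const.add (measurable_id.pow_const 2)).mul
      (measurable_id.sub measurable_const))
  · rw [ae_restrict_iff' measurableSet_Iic]
    refine ae_of_all _ fun y hy => ?_
    have h1 : (0:ℝ) < 1 + y^2 := by positivity
    have h2 : δ ≤ x - y := by
      have : y ≤ x - δ := hy
      linarith
    have h3 : 0 < x - y := lt_of_lt_of_le hδ h2
    have e : |(1+y^2)*(y-x)| = (1+y^2)*(x-y) := by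
      rw [abs_mul, abs_of_pos h1, abs_of_neg (by linarith : y - x < 0)]
      ring
    rw [Real.norm_eq_abs, abs_div, abs_one, e]
    rw [one_div, mul_inv, mul_comm ((1+y^2)⁻¹)]
    gcongr

/-- For every `x ∈ ℝ`, the principal value
`lim_{δ→0⁺} ∫_{|y−x|≥δ} 1/((1+y²)(y−x)) dy` exists and equals `−πx/(1+x²)`. -/
theorem stmt_7 (x : ℝ) :
    Tendsto (fun δ : ℝ => ∫ y in {y : ℝ | δ ≤ |y - x|}, 1/((1+y^2)*(y - x)))
      (𝓝[>] (0:ℝ)) (𝓝 (-Real.pi*x/(1+x^2))) := by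
  have hx1 : (0:ℝ) < 1 + x^2 := by positivity
  set c : ℝ := (1+x^2)⁻¹ with hc
  set H : ℝ → ℝ := fun δ =>
    c * ((1/2)*(Real.log (1+(x+δ)^2) - Real.log (1+(x-δ)^2))
      + x*(Real.arctan (x+δ) - Real.arctan (x-δ))) - c*x*π with hH
  have hcontH : ContinuousAt H 0 := by
    have l1 : ContinuousAt (fun δ : ℝ => Real.log (1+(x+δ)^2)) 0 :=
      ContinuousAt.log (by fun_prop) (by positivity)
    have l2 : ContinuousAt (fun δ : ℝ => Real.log (1+(x-δ)^2)) 0 :=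
      ContinuousAt.log (by fun_prop) (by positivity)
    have l3 : ContinuousAt (fun δ : ℝ => Real.arctan (x+δ)) 0 :=
      (Real.continuous_arctan.comp (continuous_const.add continuous_id)).continuousAt
    have l4 : ContinuousAt (fun δ : ℝ => Real.arctan (x-δ)) 0 :=
      (Real.continuous_arctan.comp (continuous_const.sub continuous_id)).continuousAt
    exact ((((l1.sub l2).const_mul _).add ((l3.sub l4).const_mul x)).const_mul c).sub
      continuousAt_const
  have h0 : H 0 = -π*x/(1+x^2) := by
    simp only [hH, add_zero, sub_zero, sub_self, mul_zero, zero_add, zero_sub, zero_mul]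
    rw [hc]
    ring
  have hlim : Tendsto H (𝓝[>] (0:ℝ)) (𝓝 (-π*x/(1+x^2))) := by
    rw [← h0]
    exact hcontH.tendsto.mono_left nhdsWithin_le_nhds
  refine Tendsto.congr' ?_ hlim
  filter_upwards [self_mem_nhdsWithin] with δ (hδ : 0 < δ)
  have hset : {y : ℝ | δ ≤ |y - x|} = Iic (x-δ) ∪ Ici (x+δ) := by
    ext y
    simp only [mem_setOf_eq, mem_union, mem_Iic, mem_Ici, le_abs]
    constructor
    · rintro (h | h)
      · right; linarith
      · left; linarith
    · rintro (h | h)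
      · right; linarith
      · left; linarith
  have hdisj : Disjoint (Iic (x-δ)) (Ici (x+δ)) := by
    rw [Set.disjoint_left]
    intro y hy1 hy2
    simp only [mem_Iic, mem_Ici] at hy1 hy2
    linarith
  have hIci : IntegrableOn (fun y : ℝ => 1/((1+y^2)*(y-x))) (Ici (x+δ)) := by
    rw [integrableOn_Ici_iff_integrableOn_Ioi]
    exact intR x δ hδ
  rw [hset, setIntegral_union hdisj measurableSet_Ici (intL x δ hδ) hIci,
    integral_Ici_eq_integral_Ioi]
  have hIoi : ∫ y in Ioi (x+δ), 1/((1+y^2)*(y-x))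
      = -((1+x^2)⁻¹ * (x * (π/2))) - Faux x (x+δ) := by
    apply integral_Ioi_of_hasDerivAt_of_tendsto
    · exact (Faux_hasDeriv x (x+δ) (by linarith)).continuousAt.continuousWithinAt
    · intro y hy
      exact Faux_hasDeriv x y (by simp only [mem_Ioi] at hy; intro h; rw [h] at hy; linarith)
    · exact intR x δ hδ
    · exact Faux_top x
  have hIic : ∫ y in Iic (x-δ), 1/((1+y^2)*(y-x))
      = Faux x (x-δ) - (1+x^2)⁻¹ * (x * (π/2)) := by
    apply integral_Iic_of_hasDerivAt_of_tendsto
    · exact (Faux_hasDeriv x (x-δ) (by intro h; linarith)).continuousAt.continuousWithinAt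
    · intro y hy
      exact Faux_hasDeriv x y (by simp only [mem_Iio] at hy; intro h; rw [h] at hy; linarith)
    · exact intL x δ hδ
    · exact Faux_bot x
  rw [hIoi, hIic]
  simp only [hH, Faux, hc]
  rw [show x - δ - x = -δ by ring, Real.log_neg_eq_log, show x + δ - x = δ by ring]
  ring
end

section
/- Let w : ℝ → ℝ be bounded and twice differentiable with bounded second derivative, say |w(y)| ≤ M₀ and |w″(y)| ≤ M₂ for all y. Then for every x ∈ ℝ the principal value A w(x) = lim_{δ→0⁺} ∫_{{y : |y−x| ≥ δ}} (w(y) − w(x))/(y−x)² dy exists, and for every L > 0 it satisfies |A w(x)| ≤ L·M₂ + 4·M₀/L. -/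
open Real Set Filter Topology MeasureTheory

lemma aux_taylor (w w' w'' : ℝ → ℝ) (M₂ : ℝ)
    (hw1 : ∀ y, HasDerivAt w (w' y) y)
    (hw2 : ∀ y, HasDerivAt w' (w'' y) y)
    (hM2 : ∀ y, |w'' y| ≤ M₂) (x y : ℝ) :
    |w y - w x - w' x * (y - x)| ≤ M₂ / 2 * (y - x) ^ 2 := by
  have hlip : ∀ a b : ℝ, |w' a - w' b| ≤ M₂ * |a - b| := by
    intro a b
    have := Convex.norm_image_sub_le_of_norm_hasDerivWithin_le
      (f := w') (f' := w'') (s := univ)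
      (fun z _ => (hw2 z).hasDerivWithinAt) (fun z _ => hM2 z) convex_univ
      (mem_univ b) (mem_univ a)
    simpa [Real.norm_eq_abs] using this
  set φ : ℝ → ℝ := fun s => w (x + s * (y - x)) - w x - w' x * (s * (y - x)) with hφ
  have hφ' : ∀ s : ℝ, HasDerivAt φ ((w' (x + s * (y - x)) - w' x) * (y - x)) s := by
    intro s
    have h1 : HasDerivAt (fun s : ℝ => x + s * (y - x)) (y - x) s := by
      simpa using ((hasDerivAt_id s).mul_const (y - x)).const_add x
    have h2 : HasDerivAt (fun s => w (x + s * (y - x))) (w' (x + s * (y - x)) * (y - x)) s :=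
      (hw1 _).comp s h1
    have h3 : HasDerivAt (fun s : ℝ => w x + w' x * (s * (y - x))) (w' x * (y - x)) s := by
      simpa [mul_assoc] using ((hasDerivAt_id s).mul_const (y - x)).const_mul (w' x) |>.const_add (w x)
    have := h2.sub h3
    have heq : φ = fun s => w (x + s * (y - x)) - (w x + w' x * (s * (y - x))) := by
      ext t; simp [hφ]; ring
    rw [heq]
    exact this.congr_deriv (by ring)
  have key := image_norm_le_of_norm_deriv_right_le_deriv_boundary
    (f := φ) (f' := fun s => (w' (x + s * (y - x)) - w' x) * (y - x)) (a := 0) (b := 1)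
    (B := fun s => M₂ * (y - x) ^ 2 * s ^ 2 / 2) (B' := fun s => M₂ * (y - x) ^ 2 * s)
    (fun s _ => (hφ' s).continuousAt.continuousWithinAt)
    (fun s _ => (hφ' s).hasDerivWithinAt)
    (by simp [hφ])
    (fun s => by
      have : HasDerivAt (fun s : ℝ => M₂ * (y - x) ^ 2 * s ^ 2 / 2)
          (M₂ * (y - x) ^ 2 * s) s := by
        have := ((hasDerivAt_pow 2 s).const_mul (M₂ * (y - x) ^ 2)).div_const 2
        exact this.congr_deriv (by norm_num; ring)
      exact this)
    (fun s hs => by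
      have h1 : |w' (x + s * (y - x)) - w' x| ≤ M₂ * |s * (y - x)| := by
        simpa [add_sub_cancel_left] using hlip (x + s * (y - x)) x
      have hs0 : 0 ≤ s := hs.1
      calc ‖(w' (x + s * (y - x)) - w' x) * (y - x)‖
          = |w' (x + s * (y - x)) - w' x| * |y - x| := abs_mul _ _
        _ ≤ (M₂ * |s * (y - x)|) * |y - x| := by
            apply mul_le_mul_of_nonneg_right h1 (abs_nonneg _)
        _ = M₂ * (y - x) ^ 2 * s := by
            rw [abs_mul, abs_of_nonneg hs0, ← sq_abs (y - x)]
            ring)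
  have := key (right_mem_Icc.2 zero_le_one)
  simp only [hφ, Real.norm_eq_abs, one_mul, mul_one, one_pow] at this
  calc |w y - w x - w' x * (y - x)| = |w (x + 1 * (y - x)) - w x - w' x * (1 * (y - x))| := by
        norm_num
    _ ≤ M₂ * (y - x) ^ 2 * 1 ^ 2 / 2 := key (right_mem_Icc.2 zero_le_one)
    _ = M₂ / 2 * (y - x) ^ 2 := by ring

lemma aux_invsq_Ioi (x L : ℝ) (hL : 0 < L) :
    IntegrableOn (fun y : ℝ => ((y - x) ^ 2)⁻¹) (Ioi (x + L)) volume ∧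
      ∫ y in Ioi (x + L), ((y - x) ^ 2)⁻¹ = L⁻¹ := by
  have hderiv : ∀ y ∈ Ici (x + L), HasDerivAt (fun y : ℝ => -(y - x)⁻¹) (((y - x) ^ 2)⁻¹) y := by
    intro y hy
    have hne : y - x ≠ 0 := by
      have : x + L ≤ y := hy
      nlinarith [hL]
    have h1 : HasDerivAt (fun y : ℝ => y - x) 1 y := (hasDerivAt_id y).sub_const x
    have := (h1.inv hne).neg
    exact this.congr_deriv (by ring)
  have hpos : ∀ y ∈ Ioi (x + L), 0 ≤ ((y - x) ^ 2)⁻¹ := fun y _ => by positivity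
  have htend : Tendsto (fun y : ℝ => -(y - x)⁻¹) atTop (𝓝 0) := by
    have h1 : Tendsto (fun y : ℝ => y - x) atTop atTop := tendsto_atTop_add_const_right _ (-x) tendsto_id
    have := h1.inv_tendsto_atTop
    simpa using this.neg
  have hint := integrableOn_Ioi_deriv_of_nonneg' hderiv hpos htend
  refine ⟨hint, ?_⟩
  have := integral_Ioi_of_hasDerivAt_of_nonneg' hderiv hpos htend
  rw [this]
  simp

lemma aux_invsq_Iic (x L : ℝ) (hL : 0 < L) :
    IntegrableOn (fun y : ℝ => ((y - x) ^ 2)⁻¹) (Iic (x - L)) volume ∧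
      ∫ y in Iic (x - L), ((y - x) ^ 2)⁻¹ = L⁻¹ := by
  obtain ⟨hint, hval⟩ := aux_invsq_Ioi (-x) L hL
  have hset : -x + L = -(x - L) := by ring
  have hcomp : ∀ y : ℝ, ((-y - x) ^ 2)⁻¹ = ((y - -x) ^ 2)⁻¹ := by
    intro y; congr 1; ring
  constructor
  · have A : MeasurableEmbedding fun y : ℝ => -y :=
      (Homeomorph.neg ℝ).isClosedEmbedding.measurableEmbedding
    have h3 := (MeasurePreserving.integrableOn_comp_preimage
      (Measure.measurePreserving_neg (volume : Measure ℝ)) A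
      (f := fun y : ℝ => ((y - x) ^ 2)⁻¹) (s := Iic (x - L))).1
    apply h3
    have hpre : (fun y : ℝ => -y) ⁻¹' Iic (x - L) = Ici (-(x - L)) := by
      ext y; simp [neg_le]
    rw [hpre, integrableOn_Ici_iff_integrableOn_Ioi]
    have h2 : IntegrableOn (fun y : ℝ => ((y - -x) ^ 2)⁻¹) (Ioi (-(x - L))) volume := by
      rw [← hset]; exact hint
    exact h2.congr_fun (fun y _ => by simp only [Function.comp]; exact (hcomp y).symm) measurableSet_Ioi
  · have h0 := integral_comp_neg_Ioi (-x + L) (fun y : ℝ => ((y - x) ^ 2)⁻¹)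
    rw [show -(-x + L) = x - L by ring] at h0
    rw [← h0]
    rw [show (∫ y in Ioi (-x + L), ((-y - x) ^ 2)⁻¹) = ∫ y in Ioi (-x + L), ((y - -x) ^ 2)⁻¹ from
      setIntegral_congr_fun measurableSet_Ioi (fun y _ => hcomp y)]
    exact hval

/-- Let `w : ℝ → ℝ` be bounded (`|w| ≤ M₀`) and twice differentiable with bounded second
derivative (`|w″| ≤ M₂`). Then for every `x` the principal value
`A w(x) = lim_{δ→0⁺} ∫_{|y−x|≥δ} (w(y) − w(x))/(y−x)² dy` exists, and for every `L > 0`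
it satisfies `|A w(x)| ≤ L·M₂ + 4·M₀/L`. -/
theorem stmt_10 (w w' w'' : ℝ → ℝ) (M₀ M₂ : ℝ)
    (hw0 : ∀ y, |w y| ≤ M₀)
    (hw1 : ∀ y, HasDerivAt w (w' y) y)
    (hw2 : ∀ y, HasDerivAt w' (w'' y) y)
    (hM2 : ∀ y, |w'' y| ≤ M₂) :
    ∀ x : ℝ, ∃ A : ℝ,
      Tendsto (fun δ : ℝ => ∫ y in {y : ℝ | δ ≤ |y - x|}, (w y - w x)/(y - x)^2)
        (𝓝[>] (0:ℝ)) (𝓝 A) ∧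
      ∀ L > (0:ℝ), |A| ≤ L*M₂ + 4*M₀/L := by
  intro x
  have hM2nn : 0 ≤ M₂ := (abs_nonneg _).trans (hM2 x)
  have hM0nn : 0 ≤ M₀ := (abs_nonneg _).trans (hw0 x)
  have hwcont : Continuous w := by
    rw [continuous_iff_continuousAt]; exact fun y => (hw1 y).continuousAt
  set c : ℝ := w' x with hc
  set h : ℝ → ℝ := fun y => (w y - w x) / (y - x) ^ 2 with hhdef
  set g : ℝ → ℝ := fun y => (w y - w x - c * (y - x)) / (y - x) ^ 2 with hgdef
  -- pointwise bounds
  have hg_bound : ∀ y, |g y| ≤ M₂ / 2 := by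
    intro y
    rcases eq_or_ne y x with rfl | hy
    · simp [hgdef]; positivity
    · have hyx : y - x ≠ 0 := sub_ne_zero.2 hy
      have hden : (0:ℝ) < (y - x) ^ 2 := (sq_nonneg _).lt_of_ne' (pow_ne_zero 2 hyx)
      rw [hgdef]
      rw [abs_div, abs_of_nonneg (le_of_lt hden), div_le_iff₀ hden]
      have := aux_taylor w w' w'' M₂ hw1 hw2 hM2 x y
      linarith
  have hh_bound : ∀ y, |h y| ≤ 2 * M₀ * ((y - x) ^ 2)⁻¹ := by
    intro y
    have h1 : |w y - w x| ≤ 2 * M₀ := by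
      calc |w y - w x| ≤ |w y| + |w x| := abs_sub _ _
        _ ≤ 2 * M₀ := by have := hw0 y; have := hw0 x; linarith
    rw [hhdef]
    rw [abs_div, abs_of_nonneg (sq_nonneg (y - x)), div_eq_mul_inv]
    exact mul_le_mul_of_nonneg_right h1 (inv_nonneg.2 (sq_nonneg _))
  have hxne : ∀ {y a b : ℝ}, y ∈ Icc a b → (b < x ∨ x < a) → y ≠ x := by
    rintro y a b ⟨h1, h2⟩ (hb | ha) <;> intro rfl <;> linarith
  -- measurability / continuity
  have hmeas_h : Measurable h := by
    apply Measurable.div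
    · exact (hwcont.measurable.sub measurable_const)
    · exact ((measurable_id.sub_const x).pow_const 2)
  have hmeas_g : Measurable g := by
    apply Measurable.div
    · exact ((hwcont.measurable.sub measurable_const).sub
        (measurable_const.mul (measurable_id.sub_const x)))
    · exact ((measurable_id.sub_const x).pow_const 2)
  have hcont_h : ContinuousOn h {x}ᶜ := by
    apply ContinuousOn.div
    · exact (hwcont.sub continuous_const).continuousOn
    · exact ((continuous_id.sub continuous_const).pow 2).continuousOn
    · intro y hy
      exact pow_ne_zero 2 (sub_ne_zero.2 hy)
  have hcont_g : ContinuousOn g {x}ᶜ := by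
    apply ContinuousOn.div
    · exact ((hwcont.sub continuous_const).sub
        (continuous_const.mul (continuous_id.sub continuous_const))).continuousOn
    · exact ((continuous_id.sub continuous_const).pow 2).continuousOn
    · intro y hy
      exact pow_ne_zero 2 (sub_ne_zero.2 hy)
  have hcont_odd : ContinuousOn (fun y : ℝ => c * (y - x)⁻¹) {x}ᶜ := by
    apply ContinuousOn.mul continuousOn_const
    apply ContinuousOn.inv₀ (continuous_id.sub continuous_const).continuousOn
    intro y hy; exact sub_ne_zero.2 hy
  -- integrability of h on tails
  have hint_Ioi : ∀ L : ℝ, 0 < L → IntegrableOn h (Ioi (x + L)) volume := by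
    intro L hL
    apply Integrable.mono ((aux_invsq_Ioi x L hL).1.const_mul (2 * M₀))
      (hmeas_h.aestronglyMeasurable.restrict)
    filter_upwards with y
    rw [Real.norm_eq_abs, Real.norm_eq_abs,
      abs_of_nonneg (by positivity : (0:ℝ) ≤ 2 * M₀ * ((y - x) ^ 2)⁻¹)]
    exact hh_bound y
  have hint_Iic : ∀ L : ℝ, 0 < L → IntegrableOn h (Iic (x - L)) volume := by
    intro L hL
    apply Integrable.mono ((aux_invsq_Iic x L hL).1.const_mul (2 * M₀))
      (hmeas_h.aestronglyMeasurable.restrict)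
    filter_upwards with y
    rw [Real.norm_eq_abs, Real.norm_eq_abs,
      abs_of_nonneg (by positivity : (0:ℝ) ≤ 2 * M₀ * ((y - x) ^ 2)⁻¹)]
    exact hh_bound y
  -- integrability of g on big interval
  have hint_g : ∀ L : ℝ, IntegrableOn g (Icc (x - L) (x + L)) volume := by
    intro L
    apply Measure.integrableOn_of_bounded (measure_Icc_lt_top).ne
      hmeas_g.aestronglyMeasurable
    filter_upwards with y
    exact hg_bound y
  -- tail integrals bound
  have htail : ∀ L : ℝ, 0 < L →
      |(∫ y in Iio (x - L), h y) + ∫ y in Ioi (x + L), h y| ≤ 4 * M₀ / L := by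
    intro L hL
    have habs : ∀ (s : Set ℝ), MeasurableSet s → IntegrableOn h s volume →
        IntegrableOn (fun y : ℝ => ((y - x) ^ 2)⁻¹) s volume →
        (∫ y in s, ((y - x)^2)⁻¹) = L⁻¹ → |∫ y in s, h y| ≤ 2 * M₀ * L⁻¹ := by
      intro s hs hsint hinvint hval
      calc |∫ y in s, h y| ≤ ∫ y in s, |h y| := by
            simpa [Real.norm_eq_abs] using norm_integral_le_integral_norm (μ := volume.restrict s) h
        _ ≤ ∫ y in s, 2 * M₀ * ((y - x) ^ 2)⁻¹ := by
            apply setIntegral_mono_on hsint.abs (hinvint.const_mul _) hs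
            intro y _; exact hh_bound y
        _ = 2 * M₀ * L⁻¹ := by rw [integral_const_mul, hval]
    have h1 : |∫ y in Iio (x - L), h y| ≤ 2 * M₀ * L⁻¹ := by
      rw [← integral_Iic_eq_integral_Iio]
      exact habs _ measurableSet_Iic (hint_Iic L hL) (aux_invsq_Iic x L hL).1
        (aux_invsq_Iic x L hL).2
    have h2 : |∫ y in Ioi (x + L), h y| ≤ 2 * M₀ * L⁻¹ := by
      exact habs _ measurableSet_Ioi (hint_Ioi L hL) (aux_invsq_Ioi x L hL).1
        (aux_invsq_Ioi x L hL).2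
    calc |(∫ y in Iio (x - L), h y) + ∫ y in Ioi (x + L), h y|
        ≤ |∫ y in Iio (x - L), h y| + |∫ y in Ioi (x + L), h y| := abs_add_le _ _
      _ ≤ 2 * M₀ * L⁻¹ + 2 * M₀ * L⁻¹ := add_le_add h1 h2
      _ = 4 * M₀ / L := by rw [div_eq_mul_inv]; ring
  -- pointwise decomposition
  have hpt : ∀ y : ℝ, y ≠ x → h y = g y + c * (y - x)⁻¹ := by
    intro y hy
    have hyx : y - x ≠ 0 := sub_ne_zero.2 hy
    rw [hhdef, hgdef]
    field_simp
    ring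
  -- splitting identity
  have hsplit : ∀ L : ℝ, 0 < L → ∀ δ : ℝ, 0 < δ → δ ≤ L →
      (∫ y in {y : ℝ | δ ≤ |y - x|}, h y) =
        ((∫ y in Icc (x - L) (x + L), g y) +
          ((∫ y in Iio (x - L), h y) + ∫ y in Ioi (x + L), h y))
          - ∫ y in Ioo (x - δ) (x + δ), g y := by
    intro L hL δ hδ hδL
    have hsub2 : Icc (x - L) (x - δ) ⊆ ({x}ᶜ : Set ℝ) := by
      intro y hy; exact hxne hy (Or.inl (by linarith))
    have hsub3 : Icc (x + δ) (x + L) ⊆ ({x}ᶜ : Set ℝ) := by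
      intro y hy; exact hxne hy (Or.inr (by linarith))
    have hI2h : IntegrableOn h (Icc (x - L) (x - δ)) volume :=
      (hcont_h.mono hsub2).integrableOn_compact isCompact_Icc
    have hI3h : IntegrableOn h (Icc (x + δ) (x + L)) volume :=
      (hcont_h.mono hsub3).integrableOn_compact isCompact_Icc
    have hI2g : IntegrableOn g (Icc (x - L) (x - δ)) volume :=
      (hint_g L).mono_set (Icc_subset_Icc_right (by linarith))
    have hI3g : IntegrableOn g (Icc (x + δ) (x + L)) volume :=
      (hint_g L).mono_set (Icc_subset_Icc_left (by linarith))
    have hIog : IntegrableOn g (Ioo (x - δ) (x + δ)) volume :=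
      (hint_g L).mono_set (Ioo_subset_Icc_self.trans
        (Icc_subset_Icc (by linarith) (by linarith)))
    have hI2odd : IntegrableOn (fun y : ℝ => c * (y - x)⁻¹) (Icc (x - L) (x - δ)) volume :=
      (hcont_odd.mono hsub2).integrableOn_compact isCompact_Icc
    have hI3odd : IntegrableOn (fun y : ℝ => c * (y - x)⁻¹) (Icc (x + δ) (x + L)) volume :=
      (hcont_odd.mono hsub3).integrableOn_compact isCompact_Icc
    have hS : {y : ℝ | δ ≤ |y - x|} = Iic (x - δ) ∪ Ici (x + δ) := by
      ext y
      simp only [mem_setOf_eq, mem_union, mem_Iic, mem_Ici, le_abs, neg_sub]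
      constructor
      · rintro (h1 | h1)
        · right; linarith
        · left; linarith
      · rintro (h1 | h1)
        · right; linarith
        · left; linarith
    have e1 : (∫ y in {y : ℝ | δ ≤ |y - x|}, h y)
        = (∫ y in Iic (x - δ), h y) + ∫ y in Ici (x + δ), h y := by
      rw [hS]
      apply setIntegral_union
      · rw [Set.disjoint_left]
        intro y h1 h2
        simp only [mem_Iic, mem_Ici] at h1 h2
        linarith
      · exact measurableSet_Ici
      · rw [← Iio_union_Icc_eq_Iic (show x - L ≤ x - δ by linarith)]
        exact ((hint_Iic L hL).mono_set Iio_subset_Iic_self).union hI2h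
      · rw [← Icc_union_Ioi_eq_Ici (show x + δ ≤ x + L by linarith)]
        exact hI3h.union (hint_Ioi L hL)
    have e2 : (∫ y in Iic (x - δ), h y)
        = (∫ y in Iio (x - L), h y) + ∫ y in Icc (x - L) (x - δ), h y := by
      rw [← Iio_union_Icc_eq_Iic (show x - L ≤ x - δ by linarith)]
      apply setIntegral_union
      · rw [Set.disjoint_left]
        intro y h1 h2
        simp only [mem_Iio] at h1
        exact absurd h2.1 (by linarith)
      · exact measurableSet_Icc
      · exact (hint_Iic L hL).mono_set Iio_subset_Iic_self
      · exact hI2h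
    have e3 : (∫ y in Ici (x + δ), h y)
        = (∫ y in Icc (x + δ) (x + L), h y) + ∫ y in Ioi (x + L), h y := by
      rw [← Icc_union_Ioi_eq_Ici (show x + δ ≤ x + L by linarith)]
      apply setIntegral_union
      · rw [Set.disjoint_left]
        intro y h1 h2
        simp only [mem_Ioi] at h2
        exact absurd h1.2 (by linarith)
      · exact measurableSet_Ioi
      · exact hI3h
      · exact hint_Ioi L hL
    have e4 : (∫ y in Icc (x - L) (x - δ), h y)
        = (∫ y in Icc (x - L) (x - δ), g y)
          + ∫ y in Icc (x - L) (x - δ), c * (y - x)⁻¹ := by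
      rw [← integral_add hI2g hI2odd]
      apply setIntegral_congr_fun measurableSet_Icc
      intro y hy
      exact hpt y (hsub2 hy)
    have e5 : (∫ y in Icc (x + δ) (x + L), h y)
        = (∫ y in Icc (x + δ) (x + L), g y)
          + ∫ y in Icc (x + δ) (x + L), c * (y - x)⁻¹ := by
      rw [← integral_add hI3g hI3odd]
      apply setIntegral_congr_fun measurableSet_Icc
      intro y hy
      exact hpt y (hsub3 hy)
    have c2 : (∫ y in Icc (x - L) (x - δ), c * (y - x)⁻¹) = c * Real.log (-δ / -L) := by
      rw [integral_Icc_eq_integral_Ioc,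
        ← intervalIntegral.integral_of_le (show x - L ≤ x - δ by linarith),
        intervalIntegral.integral_const_mul]
      have hcomp := intervalIntegral.integral_comp_sub_right
        (a := x - L) (b := x - δ) (fun u : ℝ => u⁻¹) x
      rw [hcomp, show x - L - x = -L by ring, show x - δ - x = -δ by ring,
        integral_inv ?hne]
      case hne =>
        intro hmem
        rcases Set.mem_uIcc.1 hmem with ⟨h1, h2⟩ | ⟨h1, h2⟩ <;> linarith
    have c3 : (∫ y in Icc (x + δ) (x + L), c * (y - x)⁻¹) = c * Real.log (L / δ) := by
      rw [integral_Icc_eq_integral_Ioc,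
        ← intervalIntegral.integral_of_le (show x + δ ≤ x + L by linarith),
        intervalIntegral.integral_const_mul]
      have hcomp := intervalIntegral.integral_comp_sub_right
        (a := x + δ) (b := x + L) (fun u : ℝ => u⁻¹) x
      rw [hcomp, show x + δ - x = δ by ring, show x + L - x = L by ring,
        integral_inv ?hne]
      case hne =>
        intro hmem
        rcases Set.mem_uIcc.1 hmem with ⟨h1, h2⟩ | ⟨h1, h2⟩ <;> linarith
    have e6 : (∫ y in Icc (x - L) (x - δ), c * (y - x)⁻¹)
        + (∫ y in Icc (x + δ) (x + L), c * (y - x)⁻¹) = 0 := by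
      rw [c2, c3, show -δ / -L = δ / L by ring,
        Real.log_div (ne_of_gt hδ) (ne_of_gt hL),
        Real.log_div (ne_of_gt hL) (ne_of_gt hδ)]
      ring
    have e7 : (∫ y in Icc (x - L) (x + L), g y)
        = (∫ y in Icc (x - L) (x - δ), g y)
          + ((∫ y in Ioo (x - δ) (x + δ), g y) + ∫ y in Icc (x + δ) (x + L), g y) := by
      have hIocg : IntegrableOn g (Ioc (x - δ) (x + L)) volume :=
        (hint_g L).mono_set (Ioc_subset_Icc_self.trans
          (Icc_subset_Icc_left (by linarith)))
      rw [← Icc_union_Ioc_eq_Icc (show x - L ≤ x - δ by linarith)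
        (show x - δ ≤ x + L by linarith)]
      rw [setIntegral_union ?d1 measurableSet_Ioc hI2g hIocg]
      · congr 1
        rw [← Ioo_union_Icc_eq_Ioc (show x - δ < x + δ by linarith)
          (show x + δ ≤ x + L by linarith)]
        rw [setIntegral_union ?d2 measurableSet_Icc hIog hI3g]
        case d2 =>
          rw [Set.disjoint_left]
          intro y h1 h2
          exact absurd h2.1 (by exact not_le.2 h1.2)
      case d1 =>
        rw [Set.disjoint_left]
        intro y h1 h2
        exact absurd h2.1 (by exact not_lt.2 h1.2)
    rw [e1, e2, e3, e4, e5, e7]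
    linarith [e6]
  -- limit
  have key : ∀ L : ℝ, 0 < L →
      Tendsto (fun δ : ℝ => ∫ y in {y : ℝ | δ ≤ |y - x|}, h y) (𝓝[>] (0:ℝ))
        (𝓝 ((∫ y in Icc (x - L) (x + L), g y) +
          ((∫ y in Iio (x - L), h y) + ∫ y in Ioi (x + L), h y))) := by
    intro L hL
    set Φ : ℝ := (∫ y in Icc (x - L) (x + L), g y) +
      ((∫ y in Iio (x - L), h y) + ∫ y in Ioi (x + L), h y) with hΦ
    have hev : ∀ᶠ δ in 𝓝[>] (0:ℝ),
        ‖(∫ y in {y : ℝ | δ ≤ |y - x|}, h y) - Φ‖ ≤ M₂ * δ := by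
      filter_upwards [Ioc_mem_nhdsGT hL] with δ hδ
      rw [hsplit L hL δ hδ.1 hδ.2]
      have hb : ‖∫ y in Ioo (x - δ) (x + δ), g y‖ ≤ M₂ / 2 * (volume (Ioo (x - δ) (x + δ))).toReal :=
        norm_setIntegral_le_of_norm_le_const (measure_Ioo_lt_top)
          (fun y _ => hg_bound y)
      rw [Real.volume_Ioo, ENNReal.toReal_ofReal (by linarith [hδ.1] : (0:ℝ) ≤ x + δ - (x - δ))] at hb
      have : Φ - (∫ y in Ioo (x - δ) (x + δ), g y) - Φ = -(∫ y in Ioo (x - δ) (x + δ), g y) := by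
        ring
      rw [this, norm_neg]
      calc ‖∫ y in Ioo (x - δ) (x + δ), g y‖ ≤ M₂ / 2 * (x + δ - (x - δ)) := hb
        _ = M₂ * δ := by ring
    have h0 : Tendsto (fun δ : ℝ => M₂ * δ) (𝓝[>] (0:ℝ)) (𝓝 0) := by
      have : Tendsto (fun δ : ℝ => M₂ * δ) (𝓝 (0:ℝ)) (𝓝 (M₂ * 0)) :=
        (continuous_const.mul continuous_id).tendsto 0
      rw [mul_zero] at this
      exact this.mono_left nhdsWithin_le_nhds
    have hsq := squeeze_zero_norm' hev h0
    have := hsq.add_const Φ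
    simpa using this
  refine ⟨(∫ y in Icc (x - 1) (x + 1), g y) +
      ((∫ y in Iio (x - 1), h y) + ∫ y in Ioi (x + 1), h y), key 1 one_pos, ?_⟩
  intro L hL
  have huniq := tendsto_nhds_unique (key 1 one_pos) (key L hL)
  rw [huniq]
  have hB : |∫ y in Icc (x - L) (x + L), g y| ≤ L * M₂ := by
    have hb : ‖∫ y in Icc (x - L) (x + L), g y‖ ≤ M₂ / 2 * (volume (Icc (x - L) (x + L))).toReal :=
      norm_setIntegral_le_of_norm_le_const (measure_Icc_lt_top)
        (fun y _ => hg_bound y)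
    rw [Real.volume_Icc, ENNReal.toReal_ofReal (by linarith : (0:ℝ) ≤ x + L - (x - L))] at hb
    calc |∫ y in Icc (x - L) (x + L), g y| ≤ M₂ / 2 * (x + L - (x - L)) := hb
      _ = L * M₂ := by ring
  calc |(∫ y in Icc (x - L) (x + L), g y) +
        ((∫ y in Iio (x - L), h y) + ∫ y in Ioi (x + L), h y)|
      ≤ |∫ y in Icc (x - L) (x + L), g y| +
        |(∫ y in Iio (x - L), h y) + ∫ y in Ioi (x + L), h y| := abs_add_le _ _
    _ ≤ L * M₂ + 4 * M₀ / L := add_le_add hB (htail L hL)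
end

section
/- Let g : ℝ² → ℝ be bounded and twice continuously differentiable with bounded second derivative, say |g(y)| ≤ M₀ and ‖D²g(y)‖ ≤ M₂ (operator norm) for all y ∈ ℝ². Then for every x ∈ ℝ² the principal value A g(x) = lim_{δ→0⁺} ∫_{{y : |y−x| ≥ δ}} (g(y) − g(x))/|y−x|³ dy exists, and for every L > 0 it satisfies |A g(x)| ≤ π·L·M₂ + 4π·M₀/L. -/
open Real Set Filter Topology MeasureTheory Metric

local notation "E2" => EuclideanSpace ℝ (Fin 2)

lemma vol_ball_one : (volume (Metric.ball (0 : E2) 1)).toReal = Real.pi := by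
  rw [EuclideanSpace.volume_ball]
  have h2 : (Fintype.card (Fin 2) : ℝ) = 2 := by simp
  rw [Fintype.card_fin]
  norm_num [Real.sq_sqrt Real.pi_nonneg, Real.Gamma_two, Real.pi_nonneg]

lemma integral_norm_radial (f : ℝ → ℝ) :
    ∫ x : E2, f ‖x‖ = (2 * Real.pi) * ∫ y in Ioi (0:ℝ), y * f y := by
  rw [MeasureTheory.integral_fun_norm_addHaar volume f]
  rw [finrank_euclideanSpace_fin]
  norm_num [vol_ball_one, smul_eq_mul]
  rw [measureReal_def, vol_ball_one]
  ring

lemma integrable_radial {f : ℝ → ℝ} (hm : Measurable f)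
    (hf : IntegrableOn (fun y => y * f y) (Ioi (0:ℝ))) :
    Integrable (fun x : E2 => f ‖x‖) := by
  have hdim : Module.finrank ℝ E2 - 1 = 1 := by rw [finrank_euclideanSpace_fin]
  have h0 : Integrable (fun y : Ioi (0:ℝ) => f y)
      (Measure.volumeIoiPow (Module.finrank ℝ E2 - 1)) := by
    rw [hdim, Measure.volumeIoiPow, integrable_withDensity_iff
      (by exact (measurable_subtype_coe.pow_const 1).ennreal_ofReal)
      (Eventually.of_forall fun _ => ENNReal.ofReal_lt_top)]
    have key : Integrable ((fun y : ℝ => y * f y) ∘ (Subtype.val : Ioi (0:ℝ) → ℝ))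
        (Measure.comap Subtype.val volume) := by
      rw [← (MeasurableEmbedding.subtype_coe measurableSet_Ioi).integrable_map_iff,
        _root_.map_comap_subtype_coe measurableSet_Ioi]
      exact hf
    refine key.congr (Eventually.of_forall fun y => ?_)
    show (y:ℝ) * f y = f y * (ENNReal.ofReal ((y:ℝ)^1)).toReal
    rw [ENNReal.toReal_ofReal (pow_nonneg (le_of_lt y.2) 1), pow_one, mul_comm]
  have h1 : Integrable (fun p : Metric.sphere (0:E2) 1 × Ioi (0:ℝ) => f p.2)
      ((volume : Measure E2).toSphere.prod
        (Measure.volumeIoiPow (Module.finrank ℝ E2 - 1))) := by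
    have hmeas : AEStronglyMeasurable (fun p : Metric.sphere (0:E2) 1 × Ioi (0:ℝ) => f p.2)
        ((volume : Measure E2).toSphere.prod
          (Measure.volumeIoiPow (Module.finrank ℝ E2 - 1))) :=
      (hm.comp (measurable_subtype_coe.comp measurable_snd)).aestronglyMeasurable
    rw [integrable_prod_iff hmeas]
    refine ⟨Eventually.of_forall fun _ => h0, ?_⟩
    have hc : Integrable (fun _ : Metric.sphere (0:E2) 1 =>
        ∫ y : Ioi (0:ℝ), ‖f y‖ ∂(Measure.volumeIoiPow (Module.finrank ℝ E2 - 1)))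
        ((volume : Measure E2).toSphere) := integrable_const _
    exact hc
  have h3 : Integrable (fun x : ({(0:E2)}ᶜ : Set E2) => f ‖(x:E2)‖)
      ((volume : Measure E2).comap Subtype.val) :=
    (((volume : Measure E2).measurePreserving_homeomorphUnitSphereProd).integrable_comp_emb
      (Homeomorph.measurableEmbedding _)).2 h1 |>.congr (Eventually.of_forall fun _ => by simp)
  have h4 : Integrable ((fun x : E2 => f ‖x‖) ∘ (Subtype.val : ({(0:E2)}ᶜ : Set E2) → E2))
      ((volume : Measure E2).comap Subtype.val) := h3
  rwa [← (MeasurableEmbedding.subtype_coe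
        (measurableSet_singleton (0:E2)).compl).integrable_map_iff,
    _root_.map_comap_subtype_coe (measurableSet_singleton (0:E2)).compl,
    MeasureTheory.restrict_compl_singleton] at h4

lemma ball_inv (r : ℝ) (hr : 0 < r) :
    IntegrableOn (fun u : E2 => ‖u‖⁻¹) (Metric.ball 0 r) ∧
      ∫ u in Metric.ball (0:E2) r, ‖u‖⁻¹ = 2 * Real.pi * r := by
  set f : ℝ → ℝ := (Set.Iio r).indicator (fun y => y⁻¹) with hfdef
  have hm : Measurable f := measurable_inv.indicator measurableSet_Iio
  have hind : (fun x : E2 => f ‖x‖) = (Metric.ball (0:E2) r).indicator (fun u => ‖u‖⁻¹) := by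
    funext u
    by_cases h : ‖u‖ < r <;>
      simp [hfdef, Set.indicator_apply, mem_ball_zero_iff, Set.mem_Iio, h]
  have heq : EqOn (fun y : ℝ => y * f y) ((Set.Ioo (0:ℝ) r).indicator (fun _ => (1:ℝ)))
      (Ioi (0:ℝ)) := by
    intro y hy
    by_cases h : y < r <;>
      simp [hfdef, Set.indicator_apply, Set.mem_Iio, Set.mem_Ioo, h, hy.out,
        mul_inv_cancel₀ (ne_of_gt hy.out)]
  have hIind : Integrable ((Set.Ioo (0:ℝ) r).indicator (fun _ => (1:ℝ))) := by
    rw [integrable_indicator_iff measurableSet_Ioo]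
    exact integrableOn_const measure_Ioo_lt_top.ne
  have hprof : IntegrableOn (fun y : ℝ => y * f y) (Ioi (0:ℝ)) :=
    (hIind.integrableOn).congr_fun heq.symm measurableSet_Ioi
  have hint : Integrable (fun x : E2 => f ‖x‖) := integrable_radial hm hprof
  have hvalIoi : ∫ y in Ioi (0:ℝ), y * f y = r := by
    rw [setIntegral_congr_fun measurableSet_Ioi heq, setIntegral_indicator measurableSet_Ioo,
      Set.inter_eq_self_of_subset_right Set.Ioo_subset_Ioi_self, setIntegral_const,
      measureReal_def, Real.volume_Ioo, smul_eq_mul, mul_one, sub_zero, ENNReal.toReal_ofReal hr.le]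
  constructor
  · exact (integrable_indicator_iff measurableSet_ball).1 (hind ▸ hint)
  · have hval : ∫ u in Metric.ball (0:E2) r, ‖u‖⁻¹ = ∫ x : E2, f ‖x‖ := by
      rw [hind, integral_indicator measurableSet_ball]
    rw [hval, integral_norm_radial, hvalIoi]

lemma tail_inv (L : ℝ) (hL : 0 < L) :
    IntegrableOn (fun u : E2 => (‖u‖^3)⁻¹) (Metric.ball (0:E2) L)ᶜ ∧
      ∫ u in (Metric.ball (0:E2) L)ᶜ, (‖u‖^3)⁻¹ = 2 * Real.pi / L := by
  set f : ℝ → ℝ := (Set.Ici L).indicator (fun y => (y^3)⁻¹) with hfdef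
  have hm : Measurable f := ((measurable_id.pow_const 3).inv).indicator measurableSet_Ici
  have hind : (fun x : E2 => f ‖x‖)
      = ((Metric.ball (0:E2) L)ᶜ).indicator (fun u => (‖u‖^3)⁻¹) := by
    funext u
    by_cases h : L ≤ ‖u‖ <;>
      simp [hfdef, Set.indicator_apply, Set.mem_compl_iff, mem_ball_zero_iff, Set.mem_Ici, h,
        not_lt]
  have heq : EqOn (fun y : ℝ => y * f y) ((Set.Ici L).indicator (fun y => (y^2)⁻¹))
      (Ioi (0:ℝ)) := by
    intro y hy
    have hy0 : y ≠ 0 := ne_of_gt hy.out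
    by_cases h : L ≤ y
    · simp only [hfdef, Set.indicator_of_mem (Set.mem_Ici.2 h)]
      field_simp
    · simp [hfdef, Set.indicator_apply, Set.mem_Ici, h]
  have hsq : IntegrableOn (fun y : ℝ => (y^2)⁻¹) (Set.Ici L) := by
    have h1 : IntegrableOn (fun y : ℝ => y ^ (-2:ℝ)) (Ioi L) :=
      integrableOn_Ioi_rpow_of_lt (by norm_num) hL
    have h2 : IntegrableOn (fun y : ℝ => (y^2)⁻¹) (Ioi L) := by
      refine h1.congr_fun (fun y hy => ?_) measurableSet_Ioi
      beta_reduce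
      rw [Real.rpow_neg (le_of_lt (hL.trans hy.out)), Real.rpow_two]
    rwa [integrableOn_Ici_iff_integrableOn_Ioi]
  have hprof : IntegrableOn (fun y : ℝ => y * f y) (Ioi (0:ℝ)) :=
    (((integrable_indicator_iff measurableSet_Ici).2 hsq).integrableOn).congr_fun
      heq.symm measurableSet_Ioi
  have hint : Integrable (fun x : E2 => f ‖x‖) := integrable_radial hm hprof
  have hvalIoi : ∫ y in Ioi (0:ℝ), y * f y = 1 / L := by
    rw [setIntegral_congr_fun measurableSet_Ioi heq, setIntegral_indicator measurableSet_Ici,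
      show Ioi (0:ℝ) ∩ Ici L = Ici L from
        Set.inter_eq_self_of_subset_right (fun y hy => lt_of_lt_of_le hL hy),
      integral_Ici_eq_integral_Ioi]
    have : ∫ y in Ioi L, (y^2)⁻¹ = ∫ y in Ioi L, y ^ (-2:ℝ) := by
      refine setIntegral_congr_fun measurableSet_Ioi (fun y hy => ?_)
      rw [Real.rpow_neg (le_of_lt (hL.trans hy.out)), Real.rpow_two]
    rw [this, integral_Ioi_rpow_of_lt (by norm_num) hL]
    norm_num [Real.rpow_neg_one]
  constructor
  · exact (integrable_indicator_iff measurableSet_ball.compl).1 (hind ▸ hint)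
  · have hval : ∫ u in (Metric.ball (0:E2) L)ᶜ, (‖u‖^3)⁻¹ = ∫ x : E2, f ‖x‖ := by
      rw [hind, integral_indicator measurableSet_ball.compl]
    rw [hval, integral_norm_radial, hvalIoi]
    ring


/-- Let `g : ℝ² → ℝ` be bounded (`|g| ≤ M₀`) and twice continuously differentiable with
bounded second derivative (`‖D²g‖ ≤ M₂` in operator norm). Then for every `x ∈ ℝ²` the
principal value `A g(x) = lim_{δ→0⁺} ∫_{|y−x|≥δ} (g(y) − g(x))/|y−x|³ dy` exists, and
for every `L > 0` it satisfies `|A g(x)| ≤ π·L·M₂ + 4π·M₀/L`. -/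
theorem stmt_11 (g : EuclideanSpace ℝ (Fin 2) → ℝ) (M₀ M₂ : ℝ)
    (hg : ContDiff ℝ 2 g)
    (hg0 : ∀ y, |g y| ≤ M₀)
    (hg2 : ∀ y, ‖iteratedFDeriv ℝ 2 g y‖ ≤ M₂) :
    ∀ x : EuclideanSpace ℝ (Fin 2), ∃ A : ℝ,
      Tendsto (fun δ : ℝ =>
          ∫ y in {y : EuclideanSpace ℝ (Fin 2) | δ ≤ ‖y - x‖},
            (g y - g x)/‖y - x‖^3)
        (𝓝[>] (0:ℝ)) (𝓝 A) ∧
      ∀ L > (0:ℝ), |A| ≤ Real.pi*L*M₂ + 4*Real.pi*M₀/L := by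
  intro x
  set K : E2 → ℝ := fun u => ((g (x + u) + g (x - u) - 2 * g x) / 2) / ‖u‖^3 with hKdef
  have hM0 : 0 ≤ M₀ := le_trans (abs_nonneg _) (hg0 x)
  have hM2 : 0 ≤ M₂ := le_trans (norm_nonneg _) (hg2 x)
  have hgdiff : Differentiable ℝ g := hg.differentiable (by norm_num)
  have hgC1 : ContDiff ℝ 1 (fderiv ℝ g) := hg.fderiv_right (by norm_num)
  have hD2 : ∀ y : E2, ‖fderiv ℝ (fderiv ℝ g) y‖ ≤ M₂ := by
    intro y
    refine ContinuousLinearMap.opNorm_le_bound _ hM2 fun a => ?_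
    refine ContinuousLinearMap.opNorm_le_bound _ (mul_nonneg hM2 (norm_nonneg a)) fun b => ?_
    have h2 : fderiv ℝ (fderiv ℝ g) y a b = iteratedFDeriv ℝ 2 g y ![a, b] := by
      rw [iteratedFDeriv_two_apply]
      simp
    rw [h2]
    calc ‖iteratedFDeriv ℝ 2 g y ![a,b]‖
        ≤ ‖iteratedFDeriv ℝ 2 g y‖ * ∏ i, ‖![a,b] i‖ :=
          ContinuousMultilinearMap.le_opNorm _ _
      _ ≤ M₂ * (‖a‖ * ‖b‖) := by
          rw [Fin.prod_univ_two]
          simp only [Matrix.cons_val_zero, Matrix.cons_val_one, Matrix.head_cons]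
          exact mul_le_mul_of_nonneg_right (hg2 y) (by positivity)
      _ = M₂ * ‖a‖ * ‖b‖ := by ring
  have hfd : ∀ a b : E2, ‖fderiv ℝ g a - fderiv ℝ g b‖ ≤ M₂ * ‖a - b‖ := by
    intro a b
    exact Convex.norm_image_sub_le_of_norm_fderiv_le
      (fun y _ => (hgC1.differentiable one_ne_zero).differentiableAt)
      (fun y _ => hD2 y) convex_univ (Set.mem_univ b) (Set.mem_univ a)
  have hk2 : ∀ u : E2, |(g (x + u) + g (x - u) - 2 * g x) / 2| ≤ M₂ / 2 * ‖u‖^2 := by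
    intro u
    set φ : ℝ → ℝ := fun t => (g (x + t • u) + g (x - t • u)) / 2 - g x with hphidef
    set φ' : ℝ → ℝ :=
      fun t => (fderiv ℝ g (x + t • u) u - fderiv ℝ g (x - t • u) u) / 2 with hphi'def
    have hline : ∀ t : ℝ, HasDerivAt (fun s : ℝ => x + s • u) u t := by
      intro t
      simpa using ((hasDerivAt_id t).smul_const u).const_add x
    have hline' : ∀ t : ℝ, HasDerivAt (fun s : ℝ => x - s • u) (-u) t := by
      intro t
      simpa using ((hasDerivAt_id t).smul_const u).const_sub x
    have hphid : ∀ t : ℝ, HasDerivAt φ (φ' t) t := by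
      intro t
      have h1 : HasDerivAt (fun s : ℝ => g (x + s • u)) (fderiv ℝ g (x + t • u) u) t :=
        (hgdiff (x + t • u)).hasFDerivAt.comp_hasDerivAt t (hline t)
      have h2 : HasDerivAt (fun s : ℝ => g (x - s • u)) (fderiv ℝ g (x - t • u) (-u)) t :=
        (hgdiff (x - t • u)).hasFDerivAt.comp_hasDerivAt t (hline' t)
      have h3 := ((h1.add h2).div_const 2).sub_const (g x)
      refine h3.congr_deriv ?_
      simp only [hphi'def, map_neg]
      ring
    have hphi'b : ∀ t ∈ Set.Ico (0:ℝ) 1, ‖φ' t‖ ≤ (M₂ * ‖u‖^2) * t := by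
      intro t ht
      have hdiff : (x + t • u) - (x - t • u) = (2 * t) • u := by
        rw [two_mul, add_smul]
        abel
      have hb := hfd (x + t • u) (x - t • u)
      rw [hdiff] at hb
      have hnorm : ‖(2*t) • u‖ = 2 * t * ‖u‖ := by
        rw [norm_smul, Real.norm_eq_abs, abs_of_nonneg (by nlinarith [ht.1])]
      have hsub : ‖(fderiv ℝ g (x + t•u) - fderiv ℝ g (x - t•u)) u‖
          ≤ (M₂ * (2 * t * ‖u‖)) * ‖u‖ := by
        calc ‖(fderiv ℝ g (x + t•u) - fderiv ℝ g (x - t•u)) u‖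
            ≤ ‖fderiv ℝ g (x + t•u) - fderiv ℝ g (x - t•u)‖ * ‖u‖ :=
              ContinuousLinearMap.le_opNorm _ _
          _ ≤ (M₂ * (2 * t * ‖u‖)) * ‖u‖ := by
              apply mul_le_mul_of_nonneg_right _ (norm_nonneg u)
              rw [← hnorm]
              exact hb
      calc ‖φ' t‖ = ‖(fderiv ℝ g (x + t•u) - fderiv ℝ g (x - t•u)) u‖ / 2 := by
            simp only [hphi'def, ContinuousLinearMap.sub_apply, Real.norm_eq_abs, abs_div,
              abs_two]
        _ ≤ ((M₂ * (2 * t * ‖u‖)) * ‖u‖) / 2 := by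
            linarith [hsub]
        _ = (M₂ * ‖u‖^2) * t := by ring
    have hB : ∀ t : ℝ, HasDerivAt (fun s : ℝ => (M₂ * ‖u‖^2) * s^2 / 2) ((M₂ * ‖u‖^2) * t) t := by
      intro t
      have := ((hasDerivAt_pow 2 t).const_mul (M₂ * ‖u‖^2)).div_const 2
      refine this.congr_deriv ?_
      norm_num only
      ring
    have ha : ‖φ 0‖ ≤ (M₂ * ‖u‖^2) * (0:ℝ)^2 / 2 := by
      simp [hphidef]
    have key := image_norm_le_of_norm_deriv_right_le_deriv_boundary
      (fun t _ => (hphid t).continuousAt.continuousWithinAt)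
      (fun t _ => (hphid t).hasDerivWithinAt) ha hB hphi'b
      (Set.right_mem_Icc.2 zero_le_one)
    have hphi1 : φ 1 = (g (x + u) + g (x - u) - 2 * g x) / 2 := by
      simp only [hphidef, one_smul]
      ring
    rw [← hphi1]
    calc |φ 1| ≤ (M₂ * ‖u‖^2) * (1:ℝ)^2 / 2 := key
      _ = M₂ / 2 * ‖u‖^2 := by ring
  have hk0 : ∀ u : E2, |(g (x + u) + g (x - u) - 2 * g x) / 2| ≤ 2 * M₀ := by
    intro u
    have h1 := abs_le.1 (hg0 (x + u))
    have h2 := abs_le.1 (hg0 (x - u))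
    have h3 := abs_le.1 (hg0 x)
    rw [abs_div, abs_two, div_le_iff₀ (by norm_num : (0:ℝ) < 2), abs_le]
    constructor <;> nlinarith [h1.1, h1.2, h2.1, h2.2, h3.1, h3.2]
  have hKb1 : ∀ u : E2, |K u| ≤ M₂ / 2 * ‖u‖⁻¹ := by
    intro u
    rcases eq_or_ne u 0 with rfl | hu
    · simp [hKdef]
    · have hn : 0 < ‖u‖ := norm_pos_iff.2 hu
      simp only [hKdef]
      rw [abs_div, abs_of_nonneg (by positivity : (0:ℝ) ≤ ‖u‖^3),
        div_le_iff₀ (by positivity : (0:ℝ) < ‖u‖^3)]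
      calc |(g (x + u) + g (x - u) - 2 * g x)/2| ≤ M₂/2 * ‖u‖^2 := hk2 u
        _ = M₂/2 * ‖u‖⁻¹ * ‖u‖^3 := by
            field_simp
  have hKb2 : ∀ u : E2, |K u| ≤ (2*M₀) * (‖u‖^3)⁻¹ := by
    intro u
    simp only [hKdef]
    rw [div_eq_mul_inv _ (‖u‖^3), abs_mul, abs_inv,
      abs_of_nonneg (pow_nonneg (norm_nonneg u) 3)]
    exact mul_le_mul_of_nonneg_right (hk0 u) (inv_nonneg.2 (pow_nonneg (norm_nonneg u) 3))
  have hKm : Measurable K := by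
    have hc : Continuous fun u : E2 => (g (x + u) + g (x - u) - 2 * g x) / 2 := by
      apply Continuous.div_const
      exact ((hg.continuous.comp (continuous_const.add continuous_id)).add
        (hg.continuous.comp (continuous_const.sub continuous_id))).sub continuous_const
    exact hc.measurable.div (measurable_norm.pow_const 3)
  obtain ⟨hball1, -⟩ := ball_inv 1 one_pos
  obtain ⟨htail1, -⟩ := tail_inv 1 one_pos
  have hKint : Integrable K := by
    have h1 : IntegrableOn K (Metric.ball (0:E2) 1) := by
      apply Integrable.mono' (hball1.const_mul (M₂/2)) hKm.aestronglyMeasurable.restrict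
      exact Eventually.of_forall fun u => by rw [Real.norm_eq_abs]; exact hKb1 u
    have h2 : IntegrableOn K (Metric.ball (0:E2) 1)ᶜ := by
      apply Integrable.mono' (htail1.const_mul (2*M₀)) hKm.aestronglyMeasurable.restrict
      exact Eventually.of_forall fun u => by rw [Real.norm_eq_abs]; exact hKb2 u
    have h3 := h1.union h2
    rwa [Set.union_compl_self, integrableOn_univ] at h3
  have hsplit : ∀ L : ℝ, 0 < L → |∫ u in Metric.ball (0:E2) L, K u| ≤ Real.pi * L * M₂ ∧
      |∫ u in (Metric.ball (0:E2) L)ᶜ, K u| ≤ 4 * Real.pi * M₀ / L := by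
    intro L hL
    obtain ⟨hb, hbv⟩ := ball_inv L hL
    obtain ⟨ht, htv⟩ := tail_inv L hL
    constructor
    · calc |∫ u in Metric.ball (0:E2) L, K u|
          ≤ ∫ u in Metric.ball (0:E2) L, M₂/2 * ‖u‖⁻¹ := by
            rw [← Real.norm_eq_abs]
            exact norm_integral_le_of_norm_le (hb.const_mul (M₂/2))
              (Eventually.of_forall fun u => by rw [Real.norm_eq_abs]; exact hKb1 u)
        _ = M₂/2 * (2 * Real.pi * L) := by rw [integral_const_mul, hbv]
        _ = Real.pi * L * M₂ := by ring
    · calc |∫ u in (Metric.ball (0:E2) L)ᶜ, K u|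
          ≤ ∫ u in (Metric.ball (0:E2) L)ᶜ, (2*M₀) * (‖u‖^3)⁻¹ := by
            rw [← Real.norm_eq_abs]
            exact norm_integral_le_of_norm_le (ht.const_mul (2*M₀))
              (Eventually.of_forall fun u => by rw [Real.norm_eq_abs]; exact hKb2 u)
        _ = (2*M₀) * (2 * Real.pi / L) := by rw [integral_const_mul, htv]
        _ = 4 * Real.pi * M₀ / L := by ring
  have hSmeas : ∀ δ : ℝ, MeasurableSet {y : E2 | δ ≤ ‖y - x‖} := fun δ =>
    (isClosed_le continuous_const ((continuous_id.sub continuous_const).norm)).measurableSet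
  have hS0meas : ∀ δ : ℝ, MeasurableSet {u : E2 | δ ≤ ‖u‖} := fun δ =>
    (isClosed_le continuous_const continuous_norm).measurableSet
  have hFδ : ∀ δ : ℝ, 0 < δ →
      (∫ y in {y : E2 | δ ≤ ‖y - x‖}, (g y - g x)/‖y - x‖^3)
        = (∫ u, K u) - ∫ u in Metric.ball (0:E2) δ, K u := by
    intro δ hδ
    set G : E2 → ℝ := fun u => (g (x + u) - g x)/‖u‖^3 with hGdef
    have step1 : (∫ y in {y : E2 | δ ≤ ‖y - x‖}, (g y - g x)/‖y - x‖^3)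
        = ∫ u in {u : E2 | δ ≤ ‖u‖}, G u := by
      rw [← integral_indicator (hSmeas δ), ← integral_indicator (hS0meas δ)]
      have hh : (fun y => Set.indicator {y : E2 | δ ≤ ‖y - x‖}
            (fun y => (g y - g x)/‖y - x‖^3) y)
          = fun y => Set.indicator {u : E2 | δ ≤ ‖u‖} G (y - x) := by
        funext y
        by_cases h : δ ≤ ‖y - x‖ <;>
          simp [Set.indicator_apply, Set.mem_setOf_eq, h, hGdef,
            show x + (y - x) = y from by abel]
      rw [hh, integral_sub_right_eq_self (fun u => Set.indicator {u : E2 | δ ≤ ‖u‖} G u) x]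
    have hSball : {u : E2 | δ ≤ ‖u‖} = (Metric.ball (0:E2) δ)ᶜ := by
      ext u
      simp [mem_ball_zero_iff, not_lt]
    have hGm : Measurable G := by
      have hc : Continuous fun u : E2 => g (x + u) - g x :=
        (hg.continuous.comp (continuous_const.add continuous_id)).sub continuous_const
      exact hc.measurable.div (measurable_norm.pow_const 3)
    have hGb : ∀ u : E2, |G u| ≤ (2*M₀) * (‖u‖^3)⁻¹ := by
      intro u
      simp only [hGdef]
      rw [div_eq_mul_inv _ (‖u‖^3), abs_mul, abs_inv,
        abs_of_nonneg (pow_nonneg (norm_nonneg u) 3)]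
      have h1 := abs_le.1 (hg0 (x + u))
      have h2 := abs_le.1 (hg0 x)
      refine mul_le_mul_of_nonneg_right ?_ (inv_nonneg.2 (pow_nonneg (norm_nonneg u) 3))
      rw [abs_le]
      constructor <;> linarith [h1.1, h1.2, h2.1, h2.2]
    obtain ⟨htδ, -⟩ := tail_inv δ hδ
    have hGi : IntegrableOn G {u : E2 | δ ≤ ‖u‖} := by
      rw [hSball]
      apply Integrable.mono' (htδ.const_mul (2*M₀)) hGm.aestronglyMeasurable.restrict
      exact Eventually.of_forall fun u => by rw [Real.norm_eq_abs]; exact hGb u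
    have hGnegi : IntegrableOn (fun u => G (-u)) {u : E2 | δ ≤ ‖u‖} := by
      rw [hSball]
      apply Integrable.mono' (htδ.const_mul (2*M₀))
        ((hGm.comp measurable_neg).aestronglyMeasurable).restrict
      refine Eventually.of_forall fun u => ?_
      have hb2 := hGb (-u)
      rw [norm_neg] at hb2
      rw [Real.norm_eq_abs]
      exact hb2
    have hneg : ∫ u in {u : E2 | δ ≤ ‖u‖}, G (-u) = ∫ u in {u : E2 | δ ≤ ‖u‖}, G u := by
      rw [← integral_indicator (hS0meas δ), ← integral_indicator (hS0meas δ)]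
      have hh : (fun u : E2 => Set.indicator {u : E2 | δ ≤ ‖u‖} (fun v => G (-v)) u)
          = fun u : E2 => Set.indicator {u : E2 | δ ≤ ‖u‖} G (-u) := by
        funext u
        by_cases h : δ ≤ ‖u‖ <;> simp [Set.indicator_apply, Set.mem_setOf_eq, h, norm_neg]
      rw [hh, integral_neg_eq_self]
    have hKG : ∀ u : E2, K u = (G u + G (-u)) / 2 := by
      intro u
      simp only [hKdef, hGdef, norm_neg, ← sub_eq_add_neg]
      ring
    have step2 : ∫ u in {u : E2 | δ ≤ ‖u‖}, G u = ∫ u in {u : E2 | δ ≤ ‖u‖}, K u := by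
      have hc : ∫ u in {u:E2 | δ ≤ ‖u‖}, K u = ∫ u in {u:E2 | δ ≤ ‖u‖}, (G u + G (-u))/2 :=
        integral_congr_ae (Eventually.of_forall fun u => hKG u)
      rw [hc, integral_div, integral_add hGi hGnegi, hneg]
      ring
    have step3 : ∫ u in {u : E2 | δ ≤ ‖u‖}, K u
        = (∫ u, K u) - ∫ u in Metric.ball (0:E2) δ, K u := by
      rw [hSball]
      have h := integral_add_compl (measurableSet_ball (x := (0:E2)) (ε := δ)) hKint
      linarith [h]
    rw [step1, step2, step3]
  refine ⟨∫ u, K u, ?_, ?_⟩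
  · rw [tendsto_iff_dist_tendsto_zero]
    have hdistb : ∀ δ : ℝ, 0 < δ →
        dist (∫ y in {y : E2 | δ ≤ ‖y - x‖}, (g y - g x)/‖y - x‖^3) (∫ u, K u)
          ≤ Real.pi * M₂ * δ := by
      intro δ hδ
      rw [hFδ δ hδ, dist_eq_norm]
      have hr : (∫ u, K u) - (∫ u in Metric.ball (0:E2) δ, K u) - (∫ u, K u)
          = -(∫ u in Metric.ball (0:E2) δ, K u) := by ring
      rw [hr, norm_neg, Real.norm_eq_abs]
      calc |∫ u in Metric.ball (0:E2) δ, K u| ≤ Real.pi * δ * M₂ := (hsplit δ hδ).1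
        _ = Real.pi * M₂ * δ := by ring
    refine squeeze_zero' (g := fun δ => Real.pi * M₂ * δ)
      (Eventually.of_forall fun δ => dist_nonneg) ?_ ?_
    · filter_upwards [self_mem_nhdsWithin] with δ hδ
      exact hdistb δ hδ
    · have h := (tendsto_id (x := 𝓝 (0:ℝ))).const_mul (Real.pi * M₂)
      simpa using h.mono_left nhdsWithin_le_nhds
  · intro L hL
    obtain ⟨h1, h2⟩ := hsplit L hL
    have hA : (∫ u, K u)
        = (∫ u in Metric.ball (0:E2) L, K u) + ∫ u in (Metric.ball (0:E2) L)ᶜ, K u :=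
      (integral_add_compl measurableSet_ball hKint).symm
    rw [hA]
    calc |(∫ u in Metric.ball (0:E2) L, K u) + ∫ u in (Metric.ball (0:E2) L)ᶜ, K u|
        ≤ |∫ u in Metric.ball (0:E2) L, K u| + |∫ u in (Metric.ball (0:E2) L)ᶜ, K u| :=
          abs_add_le _ _
      _ ≤ Real.pi*L*M₂ + 4*Real.pi*M₀/L := add_le_add h1 h2
end
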